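/- arXiv:1810.04252 — 6 statements merged into one kernel-verified Lean document; each statement's English description precedes it below -/
import Mathlib

section
/- Let G be a connected even graph and let 𝒞 be a cycle decomposition of G whose cycle intersection graph CI(G) is a tree (in particular, any two cycles of 𝒞 intersect in at most one vertex). Then 𝒞 is the unique cycle decomposition of G. -/
open SimpleGraph

variable {V : Type*}

/-- A graph is *even* if every vertex has even degree. -/
def IsEvenGraph (G : SimpleGraph V) : Prop :=
  ∀ v : V, Even (G.neighborSet v).ncard

/-- A subgraph is a *cycle* if it is connected and every one of its vertices has degree 2. -/
def IsCycleSubgraph {G : SimpleGraph V} (H : G.Subgraph) : Prop :=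
  H.Connected ∧ ∀ v ∈ H.verts, (H.neighborSet v).ncard = 2

/-- A *cycle decomposition* of `G` is a family of cycle subgraphs such that every edge of `G`
lies in exactly one of them. -/
def IsCycleDecomposition (G : SimpleGraph V) (𝒞 : Set G.Subgraph) : Prop :=
  (∀ C ∈ 𝒞, IsCycleSubgraph C) ∧ ∀ e ∈ G.edgeSet, ∃! C, C ∈ 𝒞 ∧ e ∈ SimpleGraph.Subgraph.edgeSet C

/-- The edges of the cycle intersection *multigraph* of a cycle decomposition `𝒞`:
one edge joining `C` and `C'` for each pair of distinct cycles `C ≠ C'` of `𝒞` and each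
vertex `v` lying on both (the edge is labelled by `v`). -/
def CIEdges (G : SimpleGraph V) (𝒞 : Set G.Subgraph) : Set (Sym2 G.Subgraph × V) :=
  {p | ∃ C ∈ 𝒞, ∃ C' ∈ 𝒞, ∃ v : V, C ≠ C' ∧
    v ∈ C.verts ∩ SimpleGraph.Subgraph.verts C' ∧ p = (s(C, C'), v)}

/-- The underlying simple graph of the cycle intersection graph of a cycle decomposition:
two distinct cycles are adjacent iff they share a vertex. -/
def CIGraph (G : SimpleGraph V) (𝒞 : Set G.Subgraph) : SimpleGraph 𝒞 where
  Adj C D := C ≠ D ∧ ((C : G.Subgraph).verts ∩ (D : G.Subgraph).verts).Nonempty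
  symm := by
    constructor
    rintro C D ⟨h1, h2⟩
    exact ⟨h1.symm, by rwa [Set.inter_comm] at h2⟩
  loopless := by constructor; rintro C ⟨h1, _⟩; exact h1 rfl

/-- The cycle intersection graph is *simple* iff any two distinct cycles of the decomposition
intersect in at most one vertex. -/
def CISimple (G : SimpleGraph V) (𝒞 : Set G.Subgraph) : Prop :=
  ∀ C ∈ 𝒞, ∀ D ∈ 𝒞, C ≠ D →
    ((C : G.Subgraph).verts ∩ (D : G.Subgraph).verts).ncard ≤ 1

/-- `S` is a decycling set of `G` iff `G - S` is acyclic. -/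
def IsDecyclingSet (G : SimpleGraph V) (S : Set V) : Prop :=
  (G.induce Sᶜ).IsAcyclic

/-- The decycling number of `G`: the minimum size of a decycling set. -/
noncomputable def decyclingNumber (G : SimpleGraph V) : ℕ :=
  sInf {n | ∃ S : Set V, IsDecyclingSet G S ∧ S.ncard = n}

/-- The *size* of a spanning forest: its number of edges plus its number of isolated vertices. -/
noncomputable def forestSize {W : Type*} (F : SimpleGraph W) : ℕ :=
  F.edgeSet.ncard + {v : W | ∀ w, ¬ F.Adj v w}.ncard

/-- The minimum size of a spanning forest of `H` (a spanning forest is an acyclic spanning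
subgraph; note a subgraph `F ≤ H` on the same vertex type is automatically spanning). -/
noncomputable def MSF {W : Type*} (H : SimpleGraph W) : ℕ :=
  sInf {n | ∃ F ≤ H, F.IsAcyclic ∧ forestSize F = n}


section AuxUnique

variable {V : Type*}

private lemma aux_cross {G : SimpleGraph V} (H : G.Subgraph) (U U' : Set V) (v : V)
    (hcov : ∀ x y, H.Adj x y → (x ∈ U ∧ y ∈ U) ∨ (x ∈ U' ∧ y ∈ U'))
    (hint : U ∩ U' ⊆ {v}) :
    ∀ {x y : H.verts} (_ : H.coe.Walk x y), (x : V) ∈ U → (x : V) ≠ v → (y : V) ∉ U →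
      ∃ z, H.Adj v z ∧ z ∈ U ∧ z ≠ v := by
  intro x y p
  induction p with
  | nil => intro h1 _ h3; exact absurd h1 h3
  | @cons a b c h q ih =>
    intro h1 h2 h3
    have hab : H.Adj a b := h
    rcases hcov _ _ hab with ⟨_, hb⟩ | ⟨ha, _⟩
    · by_cases hbv : (b : V) = v
      · exact ⟨a, hbv ▸ hab.symm, h1, h2⟩
      · exact ih hb hbv h3
    · exact absurd (hint ⟨h1, ha⟩) h2

private lemma aux_sides {α : Type*} (T : SimpleGraph α) (e0 e1 : α) :
    ∀ {d c : α} (_ : T.Walk d c),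
      (T.deleteEdges {s(e0, e1)}).Reachable d c ∨
      (T.deleteEdges {s(e0, e1)}).Reachable d e0 ∨
      (T.deleteEdges {s(e0, e1)}).Reachable d e1 := by
  intro d c w
  induction w with
  | nil => exact Or.inl (Reachable.refl _)
  | @cons a b c h q ih =>
    by_cases he : s(a, b) = s(e0, e1)
    · rcases Sym2.eq_iff.mp he with ⟨rfl, rfl⟩ | ⟨rfl, rfl⟩
      · exact Or.inr (Or.inl (Reachable.refl _))
      · exact Or.inr (Or.inr (Reachable.refl _))
    · have hadj : (T.deleteEdges {s(e0, e1)}).Adj a b :=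
        deleteEdges_adj.mpr ⟨h, by simpa using he⟩
      rcases ih with h' | h' | h'
      · exact Or.inl (hadj.reachable.trans h')
      · exact Or.inr (Or.inl (hadj.reachable.trans h'))
      · exact Or.inr (Or.inr (hadj.reachable.trans h'))

private lemma aux_eq_of_adj_le [Fintype V] {G : SimpleGraph V} {H C : G.Subgraph}
    (hH : IsCycleSubgraph H) (hC : IsCycleSubgraph C)
    (hsub : ∀ x y, H.Adj x y → C.Adj x y) : H = C := by
  have hverts : H.verts ⊆ C.verts := by
    intro x hx
    obtain ⟨y, hy⟩ := Set.nonempty_of_ncard_ne_zero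
      (by rw [hH.2 x hx]; exact two_ne_zero)
    exact C.edge_vert (hsub _ _ hy)
  have hnbr : ∀ x ∈ H.verts, H.neighborSet x = C.neighborSet x := by
    intro x hx
    apply Set.eq_of_subset_of_ncard_le
    · intro y hy; exact hsub _ _ hy
    · rw [hH.2 x hx, hC.2 x (hverts hx)]
    · exact Set.toFinite _
  have hclosed : ∀ {x y : C.verts} (_ : C.coe.Walk x y),
      (x : V) ∈ H.verts → (y : V) ∈ H.verts := by
    intro x y p
    induction p with
    | nil => exact id
    | @cons a b c h q ih =>
      intro ha
      have hab : C.Adj a b := h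
      have hb : (b : V) ∈ H.neighborSet a := by rw [hnbr _ ha]; exact hab
      exact ih (H.edge_vert hb.symm)
  have hCH : C.verts ⊆ H.verts := by
    obtain ⟨x0, hx0⟩ := hH.1.nonempty
    intro y hy
    obtain ⟨w⟩ := hC.1.preconnected ⟨x0, hverts hx0⟩ ⟨y, hy⟩
    exact hclosed w hx0
  apply SimpleGraph.Subgraph.ext
  · exact Set.Subset.antisymm hverts hCH
  · funext x y
    apply propext
    constructor
    · exact hsub x y
    · intro hxy
      have hx : x ∈ H.verts := hCH (C.edge_vert hxy)
      have : y ∈ H.neighborSet x := by rw [hnbr _ hx]; exact hxy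
      exact this

/-- The simple graph of `H`-edges lying within `U`. -/
private def auxK {G : SimpleGraph V} (H : G.Subgraph) (U : Set V) : SimpleGraph V where
  Adj x y := H.Adj x y ∧ x ∈ U ∧ y ∈ U
  symm := ⟨fun x y ⟨h1, h2, h3⟩ => ⟨h1.symm, h3, h2⟩⟩
  loopless := ⟨fun x h => G.loopless.irrefl x (H.adj_sub h.1)⟩

private lemma aux_cycle_mem [Fintype V] {G : SimpleGraph V} {𝒞 : Set G.Subgraph}
    (hdec : IsCycleDecomposition G 𝒞) (hsimple : CISimple G 𝒞)
    (htree : (CIGraph G 𝒞).IsTree) {H : G.Subgraph} (hH : IsCycleSubgraph H) :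
    H ∈ 𝒞 := by
  classical
  obtain ⟨x0, hx0⟩ := hH.1.nonempty
  obtain ⟨y0, hy0⟩ := Set.nonempty_of_ncard_ne_zero
    (by rw [hH.2 x0 hx0]; exact two_ne_zero)
  have hxy0 : H.Adj x0 y0 := hy0
  obtain ⟨C0, ⟨hC0C, hC0e⟩, -⟩ := hdec.2 _ (G.mem_edgeSet.mpr (H.adj_sub hxy0))
  have hC0adj : C0.Adj x0 y0 := Subgraph.mem_edgeSet.mp hC0e
  have key : ∀ C1 ∈ 𝒞, ∀ x1 y1 : V, H.Adj x1 y1 → C1.Adj x1 y1 → C1 = C0 := by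
    intro C1 hC1C x1 y1 hH1 hC1adj
    by_contra hne
    set T := CIGraph G 𝒞 with hT
    set c0 : ↥𝒞 := ⟨C0, hC0C⟩ with hc0
    set c1 : ↥𝒞 := ⟨C1, hC1C⟩ with hc1
    have hne' : c0 ≠ c1 := fun hEq => hne (congrArg Subtype.val hEq).symm
    obtain ⟨w0⟩ := htree.isConnected.preconnected c0 c1
    obtain ⟨pw, hp⟩ := w0.toPath
    obtain ⟨c2, h, q, rfl⟩ := Walk.exists_eq_cons_of_ne hne' pw
    · have hc0q : c0 ∉ q.support := ((Walk.cons_isPath_iff h q).mp hp).2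
      set G' := T.deleteEdges {s(c0, c2)} with hG'
      have hbr : ¬ G'.Reachable c0 c2 :=
        isBridge_iff.mp ((isAcyclic_iff_forall_adj_isBridge.mp htree.IsAcyclic) h)
      have hcover : ∀ d : ↥𝒞, G'.Reachable d c0 ∨ G'.Reachable d c2 := by
        intro d
        obtain ⟨wd⟩ := htree.isConnected.preconnected d c0
        rcases aux_sides T c0 c2 wd with h' | h' | h'
        · exact Or.inl h'
        · exact Or.inl h'
        · exact Or.inr h'
      have hdisj : ∀ d : ↥𝒞, G'.Reachable d c0 → G'.Reachable d c2 → False :=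
        fun d h1 h2 => hbr (h1.symm.trans h2)
      set U : Set V := {x | ∃ D : ↥𝒞, G'.Reachable D c0 ∧ x ∈ (D : G.Subgraph).verts}
        with hU
      set U' : Set V := {x | ∃ D : ↥𝒞, G'.Reachable D c2 ∧ x ∈ (D : G.Subgraph).verts}
        with hU'
      obtain ⟨v, hv0, hv2⟩ := h.2
      have hvU : v ∈ U := ⟨c0, Reachable.refl _, hv0⟩
      have hvU' : v ∈ U' := ⟨c2, Reachable.refl _, hv2⟩
      have hint : U ∩ U' ⊆ {v} := by
        rintro x ⟨⟨D, hDA, hxD⟩, ⟨D', hDB, hxD'⟩⟩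
        have hDD' : D ≠ D' := fun hEq => hdisj D hDA (hEq ▸ hDB)
        have hadjDD' : T.Adj D D' := ⟨hDD', ⟨x, hxD, hxD'⟩⟩
        by_cases he : s(D, D') = s(c0, c2)
        · rcases Sym2.eq_iff.mp he with ⟨h1, h2⟩ | ⟨h1, h2⟩
          · have hle := hsimple (c0 : G.Subgraph) c0.2 (c2 : G.Subgraph) c2.2
              (fun hval => h.1 (Subtype.ext hval))
            by_contra hxv
            have hxD0 : x ∈ (c0 : G.Subgraph).verts := h1 ▸ hxD
            have hxD2 : x ∈ (c2 : G.Subgraph).verts := h2 ▸ hxD'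
            have hsub2 : {x, v} ⊆ (c0 : G.Subgraph).verts ∩ (c2 : G.Subgraph).verts := by
              rintro y (rfl | rfl)
              exacts [⟨hxD0, hxD2⟩, ⟨hv0, hv2⟩]
            have hcard := Set.ncard_le_ncard hsub2 (Set.toFinite _)
            rw [Set.ncard_pair hxv] at hcard
            omega
          · exact (hbr (h1 ▸ hDA).symm).elim
        · have hadj' : G'.Adj D D' := deleteEdges_adj.mpr ⟨hadjDD', by simpa using he⟩
          exact (hdisj D' (hadj'.symm.reachable.trans hDA) hDB).elim
      have hcov : ∀ x y, H.Adj x y → (x ∈ U ∧ y ∈ U) ∨ (x ∈ U' ∧ y ∈ U') := by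
        intro x y hxy
        obtain ⟨D, ⟨hDC, hDe⟩, -⟩ := hdec.2 _ (G.mem_edgeSet.mpr (H.adj_sub hxy))
        have hDadj : D.Adj x y := Subgraph.mem_edgeSet.mp hDe
        rcases hcover ⟨D, hDC⟩ with hs | hs
        · exact Or.inl ⟨⟨⟨D, hDC⟩, hs, D.edge_vert hDadj⟩,
            ⟨⟨D, hDC⟩, hs, D.edge_vert hDadj.symm⟩⟩
        · exact Or.inr ⟨⟨⟨D, hDC⟩, hs, D.edge_vert hDadj⟩,
            ⟨⟨D, hDC⟩, hs, D.edge_vert hDadj.symm⟩⟩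
      have hx0U : x0 ∈ U := ⟨c0, Reachable.refl _, C0.edge_vert hC0adj⟩
      have hy0U : y0 ∈ U := ⟨c0, Reachable.refl _, C0.edge_vert hC0adj.symm⟩
      have hxy0ne : x0 ≠ y0 := (H.adj_sub hxy0).ne
      obtain ⟨a, haU, hav, haH⟩ : ∃ a, a ∈ U ∧ a ≠ v ∧ a ∈ H.verts := by
        by_cases hx0v : x0 = v
        · exact ⟨y0, hy0U, fun hyv => hxy0ne (hx0v.trans hyv.symm),
            H.edge_vert hxy0.symm⟩
        · exact ⟨x0, hx0U, hx0v, H.edge_vert hxy0⟩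
      have hc1B : G'.Reachable c1 c2 := by
        have hcond : ∀ e ∈ q.edges, e ∉ ({s(c0, c2)} : Set (Sym2 ↥𝒞)) := by
          intro e heq hmem
          rw [Set.mem_singleton_iff] at hmem
          subst hmem
          exact hc0q (q.fst_mem_support_of_mem_edges heq)
        exact ⟨(q.toDeleteEdges _ hcond).reverse⟩
      have hx1U' : x1 ∈ U' := ⟨c1, hc1B, C1.edge_vert hC1adj⟩
      have hy1U' : y1 ∈ U' := ⟨c1, hc1B, C1.edge_vert hC1adj.symm⟩
      have hxy1ne : x1 ≠ y1 := (H.adj_sub hH1).ne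
      obtain ⟨b, hbU', hbv, hbH⟩ : ∃ b, b ∈ U' ∧ b ≠ v ∧ b ∈ H.verts := by
        by_cases hx1v : x1 = v
        · exact ⟨y1, hy1U', fun hyv => hxy1ne (hx1v.trans hyv.symm),
            H.edge_vert hH1.symm⟩
        · exact ⟨x1, hx1U', hx1v, H.edge_vert hH1⟩
      have hbnU : b ∉ U := fun hb => hbv (hint ⟨hb, hbU'⟩)
      have hanU' : a ∉ U' := fun ha => hav (hint ⟨haU, ha⟩)
      obtain ⟨wab⟩ := hH.1.preconnected ⟨a, haH⟩ ⟨b, hbH⟩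
      obtain ⟨z, hzadj, hzU, hzv⟩ := aux_cross H U U' v hcov hint wab haU hav hbnU
      have hint2 : U' ∩ U ⊆ {v} := by rw [Set.inter_comm]; exact hint
      have hcov2 : ∀ x y, H.Adj x y → (x ∈ U' ∧ y ∈ U') ∨ (x ∈ U ∧ y ∈ U) :=
        fun x y hxy => (hcov x y hxy).symm
      obtain ⟨z', hz'adj, hz'U', hz'v⟩ :=
        aux_cross H U' U v hcov2 hint2 wab.reverse hbU' hbv hanU'
      have hzz' : z ≠ z' := fun hEq => hzv (hint ⟨hzU, hEq ▸ hz'U'⟩)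
      have hvH : v ∈ H.verts := H.edge_vert hzadj
      have hN : H.neighborSet v = {z, z'} := by
        symm
        apply Set.eq_of_subset_of_ncard_le
        · rintro w (rfl | rfl)
          exacts [hzadj, hz'adj]
        · rw [hH.2 v hvH, Set.ncard_pair hzz']
        · exact Set.toFinite _
      set K := auxK H U with hK
      letI : DecidableRel K.Adj := Classical.decRel _
      have hKdeg : ∀ x : V, K.degree x = (K.neighborSet x).ncard := by
        intro x
        rw [← card_neighborSet_eq_degree, ← Nat.card_coe_set_eq,
          Nat.card_eq_fintype_card]
      have hdegv : K.degree v = 1 := by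
        rw [hKdeg]
        have hKv : K.neighborSet v = {z} := by
          ext w
          constructor
          · rintro (⟨h1, -, h3⟩ : H.Adj v w ∧ v ∈ U ∧ w ∈ U)
            have hw : w ∈ H.neighborSet v := h1
            rw [hN] at hw
            rcases hw with rfl | rfl
            · rfl
            · exact absurd (hint ⟨h3, hz'U'⟩) hz'v
          · rintro rfl
            exact (show H.Adj _ _ ∧ _ ∈ U ∧ _ ∈ U from ⟨hzadj, hvU, hzU⟩)
        rw [hKv, Set.ncard_singleton]
      have hdegeven : ∀ x : V, x ≠ v → Even (K.degree x) := by
        intro x hxv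
        rw [hKdeg]
        by_cases hx : x ∈ H.verts ∧ x ∈ U
        · have hKx : K.neighborSet x = H.neighborSet x := by
            ext w
            constructor
            · rintro (⟨h1, -, -⟩ : H.Adj x w ∧ x ∈ U ∧ w ∈ U); exact h1
            · intro hw
              rcases hcov x w hw with ⟨h1, h2⟩ | ⟨h1, h2⟩
              · exact (show H.Adj _ _ ∧ _ ∈ U ∧ _ ∈ U from ⟨hw, h1, h2⟩)
              · exact absurd (hint ⟨hx.2, h1⟩) hxv
          rw [hKx, hH.2 x hx.1]
          exact ⟨1, rfl⟩
        · have hKx : K.neighborSet x = ∅ := by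
            ext w
            simp only [Set.mem_empty_iff_false, iff_false]
            rintro (⟨h1, h2, -⟩ : H.Adj x w ∧ x ∈ U ∧ w ∈ U)
            exact hx ⟨H.edge_vert h1, h2⟩
          rw [hKx, Set.ncard_empty]
          exact Even.zero
      have hsum : Even (∑ x : V, K.degree x) := by
        rw [sum_degrees_eq_twice_card_edges]
        exact ⟨K.edgeFinset.card, (two_mul _)⟩
      have hsplit : ∑ x : V, K.degree x
          = K.degree v + ∑ x ∈ Finset.univ.erase v, K.degree x :=
        (Finset.add_sum_erase Finset.univ (fun x => K.degree x) (Finset.mem_univ v)).symm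
      rw [hsplit, hdegv] at hsum
      have herase : Even (∑ x ∈ Finset.univ.erase v, K.degree x) :=
        Finset.even_sum _ (fun x hx => hdegeven x (Finset.ne_of_mem_erase hx))
      rcases hsum with ⟨m, hm⟩
      rcases herase with ⟨k, hk⟩
      omega
  have hall : ∀ x y, H.Adj x y → C0.Adj x y := by
    intro x y hxy
    obtain ⟨C1, ⟨hC1C, hC1e⟩, -⟩ := hdec.2 _ (G.mem_edgeSet.mpr (H.adj_sub hxy))
    have hEq := key C1 hC1C x y hxy (Subgraph.mem_edgeSet.mp hC1e)
    exact hEq ▸ Subgraph.mem_edgeSet.mp hC1e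
  have hHC0 : H = C0 := aux_eq_of_adj_le hH (hdec.1 C0 hC0C) hall
  rw [hHC0]; exact hC0C

end AuxUnique

/-- If the cycle intersection graph of a cycle decomposition `𝒞` of a
connected even graph `G` is a tree (in particular it is simple, i.e. any two cycles of `𝒞`
intersect in at most one vertex), then `𝒞` is the unique cycle decomposition of `G`. -/
theorem cycleDecomposition_unique_of_CI_isTree [Fintype V]
    (G : SimpleGraph V) (hconn : G.Connected) (heven : IsEvenGraph G)
    (𝒞 : Set G.Subgraph) (hdec : IsCycleDecomposition G 𝒞)
    (hsimple : CISimple G 𝒞) (htree : (CIGraph G 𝒞).IsTree) :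
    ∀ 𝒟 : Set G.Subgraph, IsCycleDecomposition G 𝒟 → 𝒟 = 𝒞 := by
  intro 𝒟 h𝒟
  apply Set.Subset.antisymm
  · intro D hD
    exact aux_cycle_mem hdec hsimple htree (h𝒟.1 D hD)
  · intro C hC
    have hCcyc := hdec.1 C hC
    obtain ⟨x0, hx0⟩ := hCcyc.1.nonempty
    obtain ⟨y0, hy0⟩ := Set.nonempty_of_ncard_ne_zero
      (by rw [hCcyc.2 x0 hx0]; exact two_ne_zero)
    have hxy0 : C.Adj x0 y0 := hy0
    have heG : s(x0, y0) ∈ G.edgeSet := G.mem_edgeSet.mpr (C.adj_sub hxy0)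
    obtain ⟨D, ⟨hDD, hDe⟩, -⟩ := h𝒟.2 _ heG
    have hDC : D ∈ 𝒞 := aux_cycle_mem hdec hsimple htree (h𝒟.1 D hDD)
    obtain ⟨E, -, huniq⟩ := hdec.2 _ heG
    have h1 := huniq C ⟨hC, Subgraph.mem_edgeSet.mpr hxy0⟩
    have h2 := huniq D ⟨hDC, hDe⟩
    rw [h1, ← h2]
    exact hDD
end

section
/- Let G be a connected even graph and let 𝒞 be a cycle decomposition of G whose cycle intersection graph CI(G) is a tree. Then ∇(G) ≤ |MSF(CI(G))|, the size of a minimum spanning forest of CI(G). -/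
open SimpleGraph

variable {V : Type*}

section MyAux
open SimpleGraph Walk


section AuxWalk

variable {W : Type*} {H : SimpleGraph W}

lemma myAux_dist_ne (ha : H.IsAcyclic) {u0 u a : W}
    (h : H.Adj u a) (hr : H.Reachable u0 u) : H.dist u0 u ≠ H.dist u0 a := by
  classical
  intro heq
  obtain ⟨p, hp, hpl⟩ := hr.exists_path_of_dist
  by_cases hmem : a ∈ p.support
  · have h1 : H.dist u0 a ≤ (p.takeUntil a hmem).length := dist_le _
    have h2 := Walk.length_takeUntil_le p hmem
    have hspec := p.take_spec hmem
    have hlen : (p.takeUntil a hmem).length + (p.dropUntil a hmem).length = p.length := by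
      rw [← Walk.length_append, hspec]
    have hzero : (p.dropUntil a hmem).length = 0 := by omega
    exact h.ne (Walk.eq_of_length_eq_zero hzero).symm
  · obtain ⟨q, hq, hql⟩ := (hr.trans h.reachable).exists_path_of_dist
    have hP : (p.concat h).IsPath := by
      rw [← Walk.isPath_reverse_iff, Walk.reverse_concat]
      rw [Walk.cons_isPath_iff]
      refine ⟨hp.reverse, ?_⟩
      rw [Walk.support_reverse, List.mem_reverse]
      exact hmem
    have := ha.path_unique ⟨p.concat h, hP⟩ ⟨q, hq⟩
    have hlen : (p.concat h).length = q.length := by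
      rw [show (p.concat h) = q from congrArg Subtype.val this]
    rw [Walk.length_concat, hpl, hql] at hlen
    omega

lemma myAux_no_min_degree_two [Finite W] (ha : H.IsAcyclic)
    (U : Set W) (hU : ∀ u ∈ U, ∃ a ∈ U, ∃ b ∈ U, a ≠ b ∧ H.Adj u a ∧ H.Adj u b) :
    U = ∅ := by
  classical
  by_contra hne
  obtain ⟨u0, hu0⟩ := Set.nonempty_iff_ne_empty.2 hne
  set U' : Set W := {u ∈ U | H.Reachable u0 u} with hU'def
  have hu0' : u0 ∈ U' := ⟨hu0, Reachable.refl u0⟩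
  obtain ⟨u, huU', hmax⟩ := Set.Finite.exists_maximalFor (fun x => H.dist u0 x) U'
    (Set.toFinite _) ⟨u0, hu0'⟩
  obtain ⟨a, haU, b, hbU, hab, hadj_a, hadj_b⟩ := hU u huU'.1
  have hru : H.Reachable u0 u := huU'.2
  have hra : a ∈ U' := ⟨haU, hru.trans hadj_a.reachable⟩
  have hrb : b ∈ U' := ⟨hbU, hru.trans hadj_b.reachable⟩
  have hlt_a : H.dist u0 a < H.dist u0 u := by
    have hne' := myAux_dist_ne ha hadj_a hru
    rcases lt_or_ge (H.dist u0 a) (H.dist u0 u) with h | h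
    · exact h
    · exact absurd (le_antisymm h (hmax hra h)) hne'
  have hlt_b : H.dist u0 b < H.dist u0 u := by
    have hne' := myAux_dist_ne ha hadj_b hru
    rcases lt_or_ge (H.dist u0 b) (H.dist u0 u) with h | h
    · exact h
    · exact absurd (le_antisymm h (hmax hrb h)) hne'
  obtain ⟨p, hp, hpl⟩ := (hru.trans hadj_a.reachable).exists_path_of_dist
  obtain ⟨q, hq, hql⟩ := (hru.trans hadj_b.reachable).exists_path_of_dist
  have hu_not_p : u ∉ p.support := by
    intro hmem
    have h1 : H.dist u0 u ≤ (p.takeUntil u hmem).length := dist_le _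
    have h2 := Walk.length_takeUntil_le p hmem
    omega
  have hu_not_q : u ∉ q.support := by
    intro hmem
    have h1 : H.dist u0 u ≤ (q.takeUntil u hmem).length := dist_le _
    have h2 := Walk.length_takeUntil_le q hmem
    omega
  have hPa : (p.concat hadj_a.symm).IsPath := by
    rw [← Walk.isPath_reverse_iff, Walk.reverse_concat, Walk.cons_isPath_iff]
    exact ⟨hp.reverse, by rw [Walk.support_reverse, List.mem_reverse]; exact hu_not_p⟩
  have hPb : (q.concat hadj_b.symm).IsPath := by
    rw [← Walk.isPath_reverse_iff, Walk.reverse_concat, Walk.cons_isPath_iff]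
    exact ⟨hq.reverse, by rw [Walk.support_reverse, List.mem_reverse]; exact hu_not_q⟩
  have heq := ha.path_unique ⟨p.concat hadj_a.symm, hPa⟩ ⟨q.concat hadj_b.symm, hPb⟩
  have heq' : (p.concat hadj_a.symm) = (q.concat hadj_b.symm) := congrArg Subtype.val heq
  have hfin : a = b := by
    have := congrArg (fun w => w.reverse.getVert 1) heq'
    simpa [Walk.reverse_concat, Walk.getVert_cons_succ] using this
  exact hab hfin

end AuxWalk


section AuxSubgraph

variable {G : SimpleGraph V}

lemma myAux_propagate {K : G.Subgraph} (P : V → Prop)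
    (hstep : ∀ x y, P x → K.Adj x y → P y) :
    ∀ {a b : K.verts} (_ : K.coe.Walk a b), P a → P b := by
  intro a b p
  induction p with
  | nil => exact id
  | cons h q ih => exact fun hPa => ih (hstep _ _ hPa h)

lemma myAux_closure [Finite V] {K C : G.Subgraph}
    (hCconn : C.Connected) (hCdeg : ∀ v ∈ C.verts, (C.neighborSet v).ncard = 2)
    (hKdeg : ∀ v ∈ K.verts, (K.neighborSet v).ncard = 2)
    (hE : ∀ x y, K.Adj x y → C.Adj x y)
    {v0 : V} (hv0K : v0 ∈ K.verts) (hv0C : v0 ∈ C.verts) :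
    C.verts ⊆ K.verts := by
  have key : ∀ v, v ∈ K.verts → v ∈ C.verts → K.neighborSet v = C.neighborSet v := by
    intro v hvK hvC
    exact Set.eq_of_subset_of_ncard_le (fun w hw => hE v w hw)
      (by rw [hKdeg v hvK, hCdeg v hvC]) (Set.toFinite _)
  intro u hu
  obtain ⟨p⟩ := hCconn.coe.preconnected ⟨v0, hv0C⟩ ⟨u, hu⟩
  refine myAux_propagate (K := C) (fun x => x ∈ K.verts) ?_ p hv0K
  intro x y hx hxy
  have hxC : x ∈ C.verts := hxy.fst_mem
  have : y ∈ K.neighborSet x := by rw [key x hx hxC]; exact hxy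
  exact Subgraph.Adj.snd_mem this

lemma myAux_nbhd_empty {u v w : V} (p : G.Walk u v) (hw : w ∉ p.support) :
    p.toSubgraph.neighborSet w = ∅ := by
  ext x
  simp only [Set.mem_empty_iff_false, iff_false]
  intro hx
  exact hw ((Walk.mem_verts_toSubgraph p).1 (Subgraph.Adj.fst_mem hx))

lemma myAux_path_start {u v : V} (p : G.Walk u v) (hp : p.IsPath) (hnn : ¬ p.Nil) :
    p.toSubgraph.neighborSet u = {p.getVert 1} := by
  cases p with
  | nil => simp at hnn
  | cons h q =>
    rw [Walk.cons_isPath_iff] at hp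
    show (G.subgraphOfAdj h ⊔ q.toSubgraph).neighborSet u = _
    rw [Subgraph.neighborSet_sup, neighborSet_fst_subgraphOfAdj,
      myAux_nbhd_empty q hp.2, Set.union_empty, Walk.getVert_cons_succ, Walk.getVert_zero]

lemma myAux_cycle_deg_base {v : V} {Z : G.Walk v v} (hZ : Z.IsCycle) :
    (Z.toSubgraph.neighborSet v).ncard = 2 := by
  cases Z with
  | nil => exact (Walk.IsCycle.not_of_nil hZ).elim
  | @cons _ b _ h q =>
    rw [Walk.cons_isCycle_iff] at hZ
    obtain ⟨hq, he⟩ := hZ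
    show (((G.subgraphOfAdj h ⊔ q.toSubgraph)).neighborSet v).ncard = 2
    rw [Subgraph.neighborSet_sup, neighborSet_fst_subgraphOfAdj]
    have hqnn : ¬ q.reverse.Nil := Walk.not_nil_of_ne h.ne
    have h3 : q.reverse.toSubgraph.neighborSet v = {q.reverse.getVert 1} :=
      myAux_path_start _ hq.reverse hqnn
    rw [Walk.toSubgraph_reverse] at h3
    rw [h3]
    set c := q.reverse.getVert 1 with hc
    have hbc : b ≠ c := by
      intro hbc
      apply he
      have hadj : q.toSubgraph.Adj v c := by
        have : c ∈ q.toSubgraph.neighborSet v := by rw [h3]; exact rfl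
        exact this
      rw [← hbc] at hadj
      have : s(v, b) ∈ q.toSubgraph.edgeSet := hadj
      rwa [Walk.mem_edges_toSubgraph] at this
    rw [Set.singleton_union]
    exact Set.ncard_pair hbc

lemma myAux_cycle_deg_two {v : V} {Z : G.Walk v v} (hZ : Z.IsCycle) :
    ∀ w ∈ Z.support, (Z.toSubgraph.neighborSet w).ncard = 2 := by
  classical
  intro w hw
  have h1 := hZ.rotate hw
  have h2 : (Z.rotate w hw).toSubgraph = Z.toSubgraph := Walk.toSubgraph_rotate Z hw
  rw [← h2]
  exact myAux_cycle_deg_base h1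

end AuxSubgraph


lemma myAux_boundary [Fintype V] {G : SimpleGraph V} {K D : G.Subgraph}
    (hKconn : K.Connected)
    (hKdeg : ∀ v ∈ K.verts, (K.neighborSet v).ncard = 2)
    (hsome : ∃ x y, K.Adj x y ∧ D.Adj x y)
    (hnotall : ¬ ∀ x y, K.Adj x y → D.Adj x y) :
    ∃ v w, v ≠ w ∧
      ((∃ a, K.Adj v a ∧ D.Adj v a) ∧ ∃ b, K.Adj v b ∧ ¬ D.Adj v b) ∧
      ((∃ a, K.Adj w a ∧ D.Adj w a) ∧ ∃ b, K.Adj w b ∧ ¬ D.Adj w b) := by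
  classical
  set J : SimpleGraph V :=
    { Adj := fun x y => K.Adj x y ∧ D.Adj x y,
      symm := ⟨fun x y h => ⟨h.1.symm, h.2.symm⟩⟩,
      loopless := ⟨fun x h => G.loopless.irrefl x h.1.adj_sub⟩ } with hJdef
  haveI : DecidableRel J.Adj := Classical.decRel _
  have hJadj : ∀ {x y}, J.Adj x y ↔ (K.Adj x y ∧ D.Adj x y) := fun {x y} => Iff.rfl
  have hJsub : ∀ x, J.neighborSet x ⊆ K.neighborSet x := fun x y hy => hy.1
  have hle2 : ∀ x, (J.neighborSet x).ncard ≤ 2 := by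
    intro x
    by_cases hx : x ∈ K.verts
    · calc (J.neighborSet x).ncard ≤ (K.neighborSet x).ncard :=
            Set.ncard_le_ncard (hJsub x) (Set.toFinite _)
        _ = 2 := hKdeg x hx
    · have hempty : J.neighborSet x = ∅ :=
        Set.eq_empty_iff_forall_notMem.2 (fun y hy => hx hy.1.fst_mem)
      rw [hempty]; simp
  have hdeg : ∀ x, J.degree x = (J.neighborSet x).ncard := by
    intro x
    rw [Set.ncard_eq_toFinset_card']
    rfl
  set B : Finset V := Finset.univ.filter (fun v => Odd (J.degree v)) with hBdef
  have heven : Even B.card := J.even_card_odd_degree_vertices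
  have hBkey : ∀ v ∈ B, (J.neighborSet v).ncard = 1 := by
    intro v hv
    rw [hBdef, Finset.mem_filter] at hv
    have hodd := hv.2
    rw [hdeg v, Nat.odd_iff] at hodd
    have := hle2 v
    omega
  have hBne : B.Nonempty := by
    by_contra hBe
    have hnotodd : ∀ v, ¬ Odd (J.degree v) := by
      intro v hv
      exact hBe ⟨v, Finset.mem_filter.2 ⟨Finset.mem_univ v, hv⟩⟩
    have hfull : ∀ x, 0 < (J.neighborSet x).ncard → (J.neighborSet x).ncard = 2 := by
      intro x hpos
      have h1 := hle2 x
      have h2 := hnotodd x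
      rw [hdeg x, Nat.odd_iff] at h2
      omega
    have hP2 : ∀ x y, (J.neighborSet x).ncard = 2 → K.Adj x y → (J.neighborSet y).ncard = 2 := by
      intro x y hx hxy
      have hxK : x ∈ K.verts := hxy.fst_mem
      have heq : J.neighborSet x = K.neighborSet x :=
        Set.eq_of_subset_of_ncard_le (hJsub x) (by rw [hx, hKdeg x hxK]) (Set.toFinite _)
      have hyJ : y ∈ J.neighborSet x := by rw [heq]; exact hxy
      have h1 : x ∈ J.neighborSet y := J.symm.symm _ _ hyJ
      exact hfull y ((Set.ncard_pos (Set.toFinite _)).2 ⟨x, h1⟩)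
    obtain ⟨x0, y0, hK0, hD0⟩ := hsome
    have hx0 : (J.neighborSet x0).ncard = 2 :=
      hfull x0 ((Set.ncard_pos (Set.toFinite _)).2 ⟨y0, ⟨hK0, hD0⟩⟩)
    apply hnotall
    intro x y hxy
    have hx : (J.neighborSet x).ncard = 2 := by
      obtain ⟨p⟩ := hKconn.coe.preconnected ⟨x0, hK0.fst_mem⟩ ⟨x, hxy.fst_mem⟩
      exact myAux_propagate (fun z => (J.neighborSet z).ncard = 2) hP2 p hx0
    have heq : J.neighborSet x = K.neighborSet x :=
      Set.eq_of_subset_of_ncard_le (hJsub x) (by rw [hx, hKdeg x hxy.fst_mem]) (Set.toFinite _)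
    have : y ∈ J.neighborSet x := by rw [heq]; exact hxy
    exact this.2
  have h2card : 1 < B.card := by
    have h1 : 0 < B.card := Finset.card_pos.2 hBne
    rcases heven with ⟨k, hk⟩
    omega
  obtain ⟨v, hv, w, hw, hvw⟩ := Finset.one_lt_card.1 h2card
  have hout : ∀ u ∈ B, (∃ a, K.Adj u a ∧ D.Adj u a) ∧ ∃ b, K.Adj u b ∧ ¬ D.Adj u b := by
    intro u hu
    have h1 := hBkey u hu
    obtain ⟨a, ha⟩ : (J.neighborSet u).Nonempty :=
      (Set.ncard_pos (Set.toFinite _)).1 (by omega)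
    have huK : u ∈ K.verts := ha.1.fst_mem
    have hssub : ¬ (K.neighborSet u ⊆ J.neighborSet u) := by
      intro hsub
      have hle := Set.ncard_le_ncard hsub (Set.toFinite _)
      rw [h1, hKdeg u huK] at hle
      omega
    obtain ⟨b, hbK, hbJ⟩ := Set.not_subset.1 hssub
    exact ⟨⟨a, ha.1, ha.2⟩, ⟨b, hbK, fun hDb => hbJ ⟨hbK, hDb⟩⟩⟩
  exact ⟨v, w, hvw, hout v hv, hout w hw⟩

end MyAux

/-- If the cycle intersection graph of a cycle decomposition `𝒞` of a
connected even graph `G` is a tree, then `∇(G) ≤ |MSF(CI(G))|`, the size of a minimum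
spanning forest of `CI(G)`. -/

theorem decyclingNumber_le_MSF_of_CI_isTree [Fintype V]
    (G : SimpleGraph V) (hconn : G.Connected) (heven : IsEvenGraph G)
    (𝒞 : Set G.Subgraph) (hdec : IsCycleDecomposition G 𝒞)
    (hsimple : CISimple G 𝒞) (htree : (CIGraph G 𝒞).IsTree) :
    decyclingNumber G ≤ MSF (CIGraph G 𝒞) := by
  classical
  haveI hfinsub : Finite G.Subgraph :=
    Finite.of_injective (fun H => (H.verts, H.Adj))
      (fun H1 H2 h => SimpleGraph.Subgraph.ext (congrArg Prod.fst h) (congrArg Prod.snd h))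
  have hne : {n | ∃ F ≤ CIGraph G 𝒞, F.IsAcyclic ∧ forestSize F = n}.Nonempty :=
    ⟨forestSize ⊥, ⊥, bot_le, isAcyclic_bot, rfl⟩
  obtain ⟨F, hFle, hFac, hFsize⟩ := Nat.sInf_mem hne
  have hvertsne : ∀ C : ↥𝒞, ((C : G.Subgraph)).verts.Nonempty := by
    intro C
    obtain ⟨x⟩ := ((hdec.1 C.1 C.2).1).coe.nonempty
    exact ⟨x.1, x.2⟩
  set pick : ↥𝒞 → V := fun C => (hvertsne C).some with hpickdef
  have hpick : ∀ C : ↥𝒞, pick C ∈ (C : G.Subgraph).verts := fun C => (hvertsne C).some_mem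
  set Iso : Set ↥𝒞 := {C : ↥𝒞 | ∀ D, ¬ F.Adj C D} with hIsodef
  set S1 : Set V := {v | ∃ C D : ↥𝒞, F.Adj C D ∧ v ∈ (C : G.Subgraph).verts ∧
    v ∈ (D : G.Subgraph).verts} with hS1def
  set S : Set V := S1 ∪ (pick '' Iso) with hSdef
  have hinter : ∀ (C D : ↥𝒞), C ≠ D → ∀ v w : V, v ∈ (C : G.Subgraph).verts →
      v ∈ (D : G.Subgraph).verts → w ∈ (C : G.Subgraph).verts →
      w ∈ (D : G.Subgraph).verts → v = w := by
    intro C D hCD v w hv1 hv2 hw1 hw2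
    by_contra hvw
    have hlt : 1 < ((C : G.Subgraph).verts ∩ (D : G.Subgraph).verts).ncard :=
      (Set.one_lt_ncard (Set.toFinite _)).2 ⟨v, ⟨hv1, hv2⟩, w, ⟨hw1, hw2⟩, hvw⟩
    have := hsimple C.1 C.2 D.1 D.2 (fun h => hCD (Subtype.ext h))
    omega
  have hcard : S.ncard ≤ forestSize F := by
    have h1 : S1.ncard ≤ F.edgeSet.ncard := by
      have hch : ∀ v, v ∈ S1 → ∃ p : ↥𝒞 × ↥𝒞, F.Adj p.1 p.2 ∧
          v ∈ (p.1 : G.Subgraph).verts ∧ v ∈ (p.2 : G.Subgraph).verts := by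
        rintro v ⟨C, D, hA, h2, h3⟩
        exact ⟨(C, D), hA, h2, h3⟩
      haveI hne𝒞 : Nonempty ↥𝒞 := htree.isConnected.nonempty
      let f : V → Sym2 ↥𝒞 := fun v =>
        if h : v ∈ S1 then s((hch v h).choose.1, (hch v h).choose.2)
        else s(Classical.arbitrary ↥𝒞, Classical.arbitrary ↥𝒞)
      have hfval : ∀ v (h : v ∈ S1), f v = s((hch v h).choose.1, (hch v h).choose.2) :=
        fun v h => dif_pos h
      apply Set.ncard_le_ncard_of_injOn f ?_ ?_ (Set.toFinite _)
      · intro v hv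
        rw [hfval v hv]
        exact (SimpleGraph.mem_edgeSet F).2 ((hch v hv).choose_spec.1)
      · intro v hv w hw hfvw
        rw [hfval v hv, hfval w hw] at hfvw
        obtain ⟨hA1, hv1, hv2⟩ := (hch v hv).choose_spec
        obtain ⟨hA2, hw1, hw2⟩ := (hch w hw).choose_spec
        have hCD : (hch v hv).choose.1 ≠ (hch v hv).choose.2 := F.ne_of_adj hA1
        rcases Sym2.eq_iff.1 hfvw with ⟨h1, h2⟩ | ⟨h1, h2⟩
        · exact hinter _ _ hCD v w hv1 hv2 (by rw [h1]; exact hw1) (by rw [h2]; exact hw2)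
        · exact hinter _ _ hCD v w hv1 hv2 (by rw [h1]; exact hw2) (by rw [h2]; exact hw1)
    have h2 : (pick '' Iso).ncard ≤ Iso.ncard := Set.ncard_image_le (Set.toFinite _)
    calc S.ncard ≤ S1.ncard + (pick '' Iso).ncard := Set.ncard_union_le _ _
      _ ≤ F.edgeSet.ncard + Iso.ncard := Nat.add_le_add h1 h2
      _ = forestSize F := rfl
  have hhit : ∀ C : ↥𝒞, ∃ v, v ∈ S ∧ v ∈ (C : G.Subgraph).verts := by
    intro C
    by_cases hiso : ∀ D, ¬ F.Adj C D
    · exact ⟨pick C, Or.inr ⟨C, hiso, rfl⟩, hpick C⟩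
    · push_neg at hiso
      obtain ⟨D, hD⟩ := hiso
      have hadj : (CIGraph G 𝒞).Adj C D := hFle hD
      obtain ⟨v, hv1, hv2⟩ := hadj.2
      exact ⟨v, Or.inl ⟨C, D, hD, hv1, hv2⟩, hv1⟩
  have hdecy : IsDecyclingSet G S := by
    intro x c hc
    have hinj : Function.Injective ((SimpleGraph.Embedding.induce (G := G) Sᶜ).toHom : ↥Sᶜ → V) :=
      fun a b h => Subtype.ext h
    have hZc : (c.map (SimpleGraph.Embedding.induce (G := G) Sᶜ).toHom).IsCycle := hc.map hinj
    set Z := c.map (SimpleGraph.Embedding.induce (G := G) Sᶜ).toHom with hZdef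
    set K : G.Subgraph := Z.toSubgraph with hKdef
    have hKsupp : ∀ w ∈ Z.support, w ∉ S := by
      intro w hw
      rw [hZdef, SimpleGraph.Walk.support_map] at hw
      obtain ⟨y, hy, rfl⟩ := List.mem_map.1 hw
      exact y.2
    have hKverts : ∀ w ∈ K.verts, w ∉ S := fun w hw =>
      hKsupp w ((SimpleGraph.Walk.mem_verts_toSubgraph Z).1 hw)
    have hKdeg : ∀ w ∈ K.verts, (K.neighborSet w).ncard = 2 := fun w hw =>
      myAux_cycle_deg_two hZc w ((SimpleGraph.Walk.mem_verts_toSubgraph Z).1 hw)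
    have hKconn : K.Connected := Z.toSubgraph_connected
    have h0 : 0 < Z.length := by have := hZc.three_le_length; omega
    have hKedge : K.Adj (Z.getVert 0) (Z.getVert 1) := Z.toSubgraph_adj_getVert h0
    by_cases hall : ∃ C : ↥𝒞, ∀ x y, K.Adj x y → (C : G.Subgraph).Adj x y
    · obtain ⟨C, hC⟩ := hall
      have hCc := hdec.1 C.1 C.2
      have hsub : (C : G.Subgraph).verts ⊆ K.verts :=
        myAux_closure hCc.1 hCc.2 hKdeg hC hKedge.fst_mem ((hC _ _ hKedge).fst_mem)
      obtain ⟨s, hsS, hsC⟩ := hhit C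
      exact hKverts s (hsub hsC) hsS
    · push_neg at hall
      set U : Set ↥𝒞 := {C : ↥𝒞 | ∃ x y, K.Adj x y ∧ (C : G.Subgraph).Adj x y} with hUdef
      have hUempty : U = ∅ := by
        apply myAux_no_min_degree_two htree.IsAcyclic U
        intro D hD
        have hnotallD : ¬ ∀ x y, K.Adj x y → (D : G.Subgraph).Adj x y := by
          intro hcon
          obtain ⟨x', y', hK', hnD⟩ := hall D
          exact hnD (hcon x' y' hK')
        obtain ⟨v, w, hvw, ⟨⟨a1, ha1K, ha1D⟩, ⟨b1, hb1K, hb1D⟩⟩,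
          ⟨⟨a2, ha2K, ha2D⟩, ⟨b2, hb2K, hb2D⟩⟩⟩ :=
          myAux_boundary hKconn hKdeg hD hnotallD
        have he1 : s(v, b1) ∈ G.edgeSet := G.mem_edgeSet.2 hb1K.adj_sub
        obtain ⟨E1, ⟨hE1m, hE1e⟩, -⟩ := hdec.2 _ he1
        have hE1adj : E1.Adj v b1 := SimpleGraph.Subgraph.mem_edgeSet.1 hE1e
        have hE1ne : (⟨E1, hE1m⟩ : ↥𝒞) ≠ D := by
          intro h
          apply hb1D
          have hEv : E1 = (D : G.Subgraph) := congrArg Subtype.val h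
          rwa [hEv] at hE1adj
        have he2 : s(w, b2) ∈ G.edgeSet := G.mem_edgeSet.2 hb2K.adj_sub
        obtain ⟨E2, ⟨hE2m, hE2e⟩, -⟩ := hdec.2 _ he2
        have hE2adj : E2.Adj w b2 := SimpleGraph.Subgraph.mem_edgeSet.1 hE2e
        have hE2ne : (⟨E2, hE2m⟩ : ↥𝒞) ≠ D := by
          intro h
          apply hb2D
          have hEv : E2 = (D : G.Subgraph) := congrArg Subtype.val h
          rwa [hEv] at hE2adj
        have hE12 : (⟨E1, hE1m⟩ : ↥𝒞) ≠ (⟨E2, hE2m⟩ : ↥𝒞) := by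
          intro h
          have hEE : E1 = E2 := congrArg Subtype.val h
          apply hvw
          exact hinter D ⟨E1, hE1m⟩ hE1ne.symm v w ha1D.fst_mem hE1adj.fst_mem
            ha2D.fst_mem (show w ∈ (E1 : SimpleGraph.Subgraph G).verts by rw [hEE]; exact hE2adj.fst_mem)
        refine ⟨⟨E1, hE1m⟩, ⟨v, b1, hb1K, hE1adj⟩, ⟨E2, hE2m⟩, ⟨w, b2, hb2K, hE2adj⟩, hE12, ?_, ?_⟩
        · exact ⟨hE1ne.symm, ⟨v, ha1D.fst_mem, hE1adj.fst_mem⟩⟩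
        · exact ⟨hE2ne.symm, ⟨w, ha2D.fst_mem, hE2adj.fst_mem⟩⟩
      obtain ⟨C0, ⟨hC0m, hC0e⟩, -⟩ := hdec.2 _ (G.mem_edgeSet.2 hKedge.adj_sub)
      have hmemU : (⟨C0, hC0m⟩ : ↥𝒞) ∈ U :=
        ⟨_, _, hKedge, SimpleGraph.Subgraph.mem_edgeSet.1 hC0e⟩
      rw [hUempty] at hmemU
      exact hmemU
  have hd : decyclingNumber G ≤ S.ncard := Nat.sInf_le ⟨S, hdecy, rfl⟩
  calc decyclingNumber G ≤ S.ncard := hd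
    _ ≤ forestSize F := hcard
    _ = MSF (CIGraph G 𝒞) := hFsize
end

section
/- Let G be a connected even graph and let 𝒞 be a cycle decomposition of G whose cycle intersection graph CI(G) is a tree. If S is a minimum decycling set of G, then S determines a spanning forest of CI(G) of size at most |S|: the set of edges of CI(G) whose labelling intersection vertices lie in S is acyclic, every cycle of 𝒞 contains a vertex of S, and the subgraph of CI(G) consisting of these edges together with the remaining cycles of 𝒞 as isolated vertices is a spanning forest of CI(G) whose size (edges plus isolated vertices) is at most |S|. In particular |MSF(CI(G))| ≤ ∇(G). -/
open SimpleGraph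

variable {V : Type*}

/-- The spanning subgraph of the cycle intersection graph consisting of those edges of
`CI(G)` whose labelling intersection vertex lies in `S` (all remaining cycles of `𝒞`
appear as isolated vertices, so this subgraph is spanning). -/
def labelSubgraph (G : SimpleGraph V) (𝒞 : Set G.Subgraph) (S : Set V) :
    SimpleGraph 𝒞 where
  Adj C D := C ≠ D ∧
    ((C : G.Subgraph).verts ∩ (D : G.Subgraph).verts ∩ S).Nonempty
  symm := by
    constructor
    rintro C D ⟨h1, h2⟩
    refine ⟨h1.symm, ?_⟩
    rwa [Set.inter_comm (C : G.Subgraph).verts] at h2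
  loopless := by constructor; rintro C ⟨h1, _⟩; exact h1 rfl


section Aux

lemma triangle_not_acyclic' {W : Type*} {H : SimpleGraph W} {a b c : W}
    (hab : H.Adj a b) (hbc : H.Adj b c) (hca : H.Adj c a) : ¬ H.IsAcyclic := by
  intro hac
  have hne1 : a ≠ b := hab.ne
  have hne2 : b ≠ c := hbc.ne
  have hne3 : c ≠ a := hca.ne
  refine hac (Walk.cons hab (Walk.cons hbc (Walk.cons hca Walk.nil))) ?_
  rw [Walk.isCycle_def]
  refine ⟨?_, by simp, ?_⟩
  · rw [Walk.isTrail_def]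
    simp only [Walk.edges_cons, Walk.edges_nil, List.nodup_cons, List.mem_cons,
      List.not_mem_nil, or_false, List.mem_singleton, List.nodup_nil, and_true, Sym2.eq,
      Sym2.rel_iff', Prod.mk.injEq, Prod.swap_prod_mk]
    constructor
    · rintro (⟨rfl, rfl⟩ | ⟨rfl, rfl⟩ | ⟨rfl, rfl⟩ | ⟨rfl, rfl⟩) <;> simp_all
    · constructor
      · rintro (⟨rfl, rfl⟩ | ⟨rfl, rfl⟩) <;> simp_all
      · trivial
  · simp [hne1, hne2, hne3, Ne.symm hne1, Ne.symm hne2, Ne.symm hne3]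

lemma cycleSubgraph_meets' {V : Type*} [Fintype V] {G : SimpleGraph V} {C : G.Subgraph}
    (hC : IsCycleSubgraph C) {S : Set V} (hS : IsDecyclingSet G S) :
    ∃ v ∈ S, v ∈ C.verts := by
  classical
  by_contra h
  push_neg at h
  have hsub : C.verts ⊆ Sᶜ := fun v hv hvS => h v hvS hv
  haveI : Fintype ↥C.verts := Fintype.ofFinite _
  have hdeg : ∀ (v : ↥C.verts) (inst : Fintype ((C.coe).neighborSet v)),
      @SimpleGraph.degree _ _ v inst = 2 := by
    intro v inst
    have h2 := hC.2 v v.2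
    rw [← Nat.card_coe_set_eq] at h2
    rw [← SimpleGraph.card_neighborSet_eq_degree, ← Nat.card_eq_fintype_card,
      Nat.card_congr (Subgraph.coeNeighborSetEquiv v)]
    exact h2
  have hnotac : ¬ C.coe.IsAcyclic := by
    intro hac
    have htree : C.coe.IsTree := ⟨hC.1.coe, hac⟩
    have hcard := htree.card_edgeFinset
    have hsum := C.coe.sum_degrees_eq_twice_card_edges
    simp only [hdeg, Finset.sum_const, Finset.card_univ, smul_eq_mul] at hsum
    omega
  simp only [SimpleGraph.IsAcyclic, not_forall, not_not] at hnotac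
  obtain ⟨v, p, hp⟩ := hnotac
  let f : C.coe →g G.induce Sᶜ :=
    ⟨fun x => ⟨x.1, hsub x.2⟩, by
      intro a b hab
      simp only [comap_adj, Function.Embedding.coe_subtype]
      exact hab.adj_sub⟩
  have hinj : Function.Injective f := by
    intro a b hab
    exact Subtype.ext congr(($hab).1)
  exact hS (p.map f) (hp.map hinj)

lemma finite_subgraph' {V : Type*} [Finite V] (G : SimpleGraph V) : Finite G.Subgraph :=
  Finite.of_injective (fun H => (H.verts, H.Adj))
    (fun _ _ hab => Subgraph.ext (congrArg Prod.fst hab) (congrArg Prod.snd hab))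

lemma key_no_three {V : Type*} {G : SimpleGraph V} {𝒞 : Set G.Subgraph}
    (htree : (CIGraph G 𝒞).IsTree) {A B X : ↥𝒞} (hAB : A ≠ B) (hBX : B ≠ X) (hAX : A ≠ X)
    {v : V} (hA : v ∈ (A : G.Subgraph).verts) (hB : v ∈ (B : G.Subgraph).verts)
    (hX : v ∈ (X : G.Subgraph).verts) : False :=
  triangle_not_acyclic' (H := CIGraph G 𝒞) ⟨hAB, v, hA, hB⟩ ⟨hBX, v, hB, hX⟩
    ⟨hAX.symm, v, hX, hA⟩ htree.2

lemma label_unique' {V : Type*} {G : SimpleGraph V} {𝒞 : Set G.Subgraph}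
    (htree : (CIGraph G 𝒞).IsTree) (v : V) (A B A' B' : ↥𝒞) (hAB : A ≠ B) (hA'B' : A' ≠ B')
    (hA : v ∈ (A : G.Subgraph).verts) (hB : v ∈ (B : G.Subgraph).verts)
    (hA' : v ∈ (A' : G.Subgraph).verts) (hB' : v ∈ (B' : G.Subgraph).verts) :
    s(A, B) = s(A', B') := by
  by_contra hne
  have hX : ∃ X : ↥𝒞, (X = A' ∨ X = B') ∧ X ≠ A ∧ X ≠ B := by
    rcases eq_or_ne A' A with h1 | h1
    · rcases eq_or_ne B' B with h2 | h2
      · exact (hne (by rw [h1, h2])).elim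
      · rcases eq_or_ne B' A with h3 | h3
        · exact (hA'B' (h1.trans h3.symm)).elim
        · exact ⟨B', Or.inr rfl, h3, h2⟩
    · rcases eq_or_ne A' B with h2 | h2
      · rcases eq_or_ne B' A with h3 | h3
        · exact (hne (by rw [h2, h3]; exact Sym2.eq_swap)).elim
        · rcases eq_or_ne B' B with h4 | h4
          · exact (hA'B' (h2.trans h4.symm)).elim
          · exact ⟨B', Or.inr rfl, h3, h4⟩
      · exact ⟨A', Or.inl rfl, h1, h2⟩
  obtain ⟨X, hX1, hXA, hXB⟩ := hX
  have hXv : v ∈ (X : G.Subgraph).verts := by rcases hX1 with rfl | rfl; exacts [hA', hB']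
  exact key_no_three htree hAB (Ne.symm hXB) (Ne.symm hXA) hA hB hXv

end Aux

/-- Let `𝒞` be a cycle decomposition of a connected even graph `G` whose
cycle intersection graph is a tree, and let `S` be a minimum decycling set of `G`.  Then
the edges of `CI(G)` labelled by vertices of `S` form a subgraph of `CI(G)` which is acyclic,
every cycle of `𝒞` contains a vertex of `S`, the resulting spanning forest of `CI(G)` has
size (edges plus isolated vertices) at most `|S|`, and in particular
`|MSF(CI(G))| ≤ ∇(G)`. -/
theorem minDecyclingSet_gives_spanningForest_of_CI_isTree [Fintype V]
    (G : SimpleGraph V) (hconn : G.Connected) (heven : IsEvenGraph G)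
    (𝒞 : Set G.Subgraph) (hdec : IsCycleDecomposition G 𝒞)
    (hsimple : CISimple G 𝒞) (htree : (CIGraph G 𝒞).IsTree)
    (S : Set V) (hS : IsDecyclingSet G S) (hmin : S.ncard = decyclingNumber G) :
    labelSubgraph G 𝒞 S ≤ CIGraph G 𝒞 ∧
    (labelSubgraph G 𝒞 S).IsAcyclic ∧
    (∀ C ∈ 𝒞, ∃ v ∈ S, v ∈ SimpleGraph.Subgraph.verts C) ∧
    forestSize (labelSubgraph G 𝒞 S) ≤ S.ncard ∧
    MSF (CIGraph G 𝒞) ≤ decyclingNumber G := by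
    classical
  haveI : Finite G.Subgraph := finite_subgraph' G
  set L := labelSubgraph G 𝒞 S with hLdef
  have hle : L ≤ CIGraph G 𝒞 := by
    intro A B hab
    exact ⟨hab.1, hab.2.imp fun v hv => hv.1⟩
  have hacyc : L.IsAcyclic := by
    intro v p hp
    exact htree.2 (p.mapLe hle) (hp.mapLe hle)
  have hmeets : ∀ C ∈ 𝒞, ∃ v ∈ S, v ∈ SimpleGraph.Subgraph.verts C := fun C hC =>
    cycleSubgraph_meets' (hdec.1 C hC) hS
  have hsize : forestSize L ≤ S.ncard := by
    set E := L.edgeSet with hE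
    set I := {C : ↥𝒞 | ∀ D, ¬ L.Adj C D} with hI
    have hEx : ∀ e : ↥E, ∃ v : V, v ∈ S ∧ ∃ A B : ↥𝒞, A ≠ B ∧
        v ∈ (A : G.Subgraph).verts ∧ v ∈ (B : G.Subgraph).verts ∧ e.1 = s(A, B) := by
      rintro ⟨e, he⟩
      revert he
      refine Sym2.ind ?_ e
      intro A B he
      rw [hE, SimpleGraph.mem_edgeSet] at he
      obtain ⟨hne, v, hv⟩ := he
      exact ⟨v, hv.2, A, B, hne, hv.1.1, hv.1.2, rfl⟩
    choose fE hfES hfE using hEx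
    have hIx : ∀ C : ↥I, ∃ v : V, v ∈ S ∧ v ∈ (C.1 : G.Subgraph).verts := by
      rintro ⟨C, hC⟩
      obtain ⟨v, hv1, hv2⟩ := hmeets C.1 C.2
      exact ⟨v, hv1, hv2⟩
    choose fI hfIS hfI using hIx
    have hadj : ∀ (A B : ↥𝒞) (v : V), A ≠ B → v ∈ S → v ∈ (A : G.Subgraph).verts →
        v ∈ (B : G.Subgraph).verts → L.Adj A B := fun A B v h1 h2 h3 h4 =>
      ⟨h1, v, ⟨h3, h4⟩, h2⟩
    set g : ↥E ⊕ ↥I → V := Sum.elim fE fI with hg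
    have hgS : ∀ x, g x ∈ S := by rintro (e | c); exacts [hfES e, hfIS c]
    have hginj : Function.Injective g := by
      rintro (e | c) (e' | c') hgeq
      · obtain ⟨A, B, hAB, hA, hB, heq⟩ := hfE e
        obtain ⟨A', B', hA'B', hA', hB', heq'⟩ := hfE e'
        simp only [hg, Sum.elim_inl] at hgeq
        rw [← hgeq] at hA' hB'
        have : e = e' := by
          apply Subtype.ext
          rw [heq, heq']
          exact label_unique' htree (fE e) A B A' B' hAB hA'B' hA hB hA' hB'
        rw [this]
      · exfalso
        obtain ⟨A, B, hAB, hA, hB, heq⟩ := hfE e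
        simp only [hg, Sum.elim_inl, Sum.elim_inr] at hgeq
        rw [hgeq] at hA hB
        rcases eq_or_ne c'.1 A with h | h
        · exact c'.2 B (hadj c'.1 B (fI c') (h ▸ hAB) (hfIS c') (hfI c') hB)
        · exact c'.2 A (hadj c'.1 A (fI c') h (hfIS c') (hfI c') hA)
      · exfalso
        obtain ⟨A, B, hAB, hA, hB, heq⟩ := hfE e'
        simp only [hg, Sum.elim_inl, Sum.elim_inr] at hgeq
        rw [← hgeq] at hA hB
        rcases eq_or_ne c.1 A with h | h
        · exact c.2 B (hadj c.1 B (fI c) (h ▸ hAB) (hfIS c) (hfI c) hB)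
        · exact c.2 A (hadj c.1 A (fI c) h (hfIS c) (hfI c) hA)
      · have : c = c' := by
          by_contra hcc
          have hne : c.1 ≠ c'.1 := fun hv => hcc (Subtype.ext hv)
          simp only [hg, Sum.elim_inr] at hgeq
          exact c.2 c'.1 (hadj c.1 c'.1 (fI c) hne (hfIS c) (hfI c) (hgeq ▸ hfI c'))
        rw [this]
    have hcardle : Nat.card (↥E ⊕ ↥I) ≤ Nat.card ↥S :=
      Nat.card_le_card_of_injective (fun x => (⟨g x, hgS x⟩ : ↥S))
        (fun a b hab => hginj (congrArg Subtype.val hab))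
    rw [Nat.card_sum, Nat.card_coe_set_eq, Nat.card_coe_set_eq,
      Nat.card_coe_set_eq] at hcardle
    exact hcardle
  refine ⟨hle, hacyc, hmeets, hsize, ?_⟩
  have hmem : MSF (CIGraph G 𝒞) ≤ forestSize L :=
    Nat.sInf_le ⟨L, hle, hacyc, rfl⟩
  exact hmem.trans (hsize.trans (le_of_eq hmin))
end

section
/- Let G be a connected even graph and let 𝒞 be a cycle decomposition of G whose cycle intersection graph CI(G) is a path with n edges. Then ∇(G) = ⌈(n+1)/2⌉. -/
open SimpleGraph

variable {V : Type*}

namespace CIAux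

lemma getVert_eq_support_getElem {G : SimpleGraph V} {u v : V} (p : G.Walk u v) {i : ℕ}
    (hi : i ≤ p.length) :
    p.getVert i = p.support[i]'(by rw [SimpleGraph.Walk.length_support]; omega) := by
  induction p generalizing i with
  | nil =>
    have : i = 0 := by simpa using hi
    subst this
    simp [SimpleGraph.Walk.getVert]
  | cons h q ih =>
    cases i with
    | zero => simp [SimpleGraph.Walk.getVert]
    | succ j =>
      rw [SimpleGraph.Walk.getVert_cons_succ]
      simp only [SimpleGraph.Walk.support_cons, List.getElem_cons_succ]
      exact ih (by simpa using hi)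

lemma cycle_getVert_inj {G : SimpleGraph V} {u : V} {p : G.Walk u u} (hp : p.IsCycle)
    {s t : ℕ} (hs1 : 1 ≤ s) (hs2 : s ≤ p.length) (ht1 : 1 ≤ t) (ht2 : t ≤ p.length)
    (h : p.getVert s = p.getVert t) : s = t := by
  have hnd : p.support.tail.Nodup := ((SimpleGraph.Walk.isCycle_def p).mp hp).2.2
  rw [getVert_eq_support_getElem p hs2, getVert_eq_support_getElem p ht2] at h
  have hlen : p.support.tail.length = p.length := by
    rw [List.length_tail, SimpleGraph.Walk.length_support]; omega
  have h1 : p.support[s]'(by rw [SimpleGraph.Walk.length_support]; omega)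
      = p.support.tail[s-1]'(by omega) := by
    rw [List.getElem_tail]; congr 1; omega
  have h2 : p.support[t]'(by rw [SimpleGraph.Walk.length_support]; omega)
      = p.support.tail[t-1]'(by omega) := by
    rw [List.getElem_tail]; congr 1; omega
  rw [h1, h2] at h
  have := List.Nodup.getElem_inj_iff hnd |>.mp h
  omega

lemma not_acyclic_of_cycleSubgraph [Fintype V] {G : SimpleGraph V} {C : G.Subgraph}
    (h : IsCycleSubgraph C) : ¬ C.coe.IsAcyclic := by
  classical
  intro hac
  haveI : Fintype ↥C.verts := Fintype.ofFinite _
  haveI : DecidableRel C.coe.Adj := Classical.decRel _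
  have hconn : C.coe.Connected := SimpleGraph.Subgraph.connected_iff'.mp h.1
  have htree : C.coe.IsTree := ⟨hconn, hac⟩
  have hcard := htree.card_edgeFinset
  have hdeg : ∀ (v : ↥C.verts) (inst : Fintype ↥(C.coe.neighborSet v)),
      @SimpleGraph.degree _ C.coe v inst = 2 := by
    intro v inst
    have h2 := h.2 v.1 v.2
    haveI : Fintype ↥(C.neighborSet v.1) := Fintype.ofFinite _
    have e : @SimpleGraph.degree _ C.coe v inst = C.coe.degree v := by
      congr!
    rw [e, SimpleGraph.Subgraph.coe_degree,
      ← SimpleGraph.Subgraph.finset_card_neighborSet_eq_degree,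
      ← Set.ncard_eq_toFinset_card']
    exact h2
  have hsum := SimpleGraph.sum_degrees_eq_twice_card_edges C.coe
  simp only [hdeg, Finset.sum_const, Finset.card_univ, smul_eq_mul] at hsum
  simp only [SimpleGraph.edgeFinset_card, ← Nat.card_eq_fintype_card] at hsum hcard
  omega

end CIAux

/-- If the cycle intersection graph of a cycle decomposition `𝒞` of a
connected even graph `G` is a path with `n` edges (hence `n + 1` vertices), then
`∇(G) = ⌈(n + 1) / 2⌉`. -/


theorem decyclingNumber_of_CI_isPath [Fintype V]
    (G : SimpleGraph V) (hconn : G.Connected) (heven : IsEvenGraph G)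
    (𝒞 : Set G.Subgraph) (hdec : IsCycleDecomposition G 𝒞)
    (hsimple : CISimple G 𝒞) (n : ℕ)
    (hpath : Nonempty (CIGraph G 𝒞 ≃g SimpleGraph.pathGraph (n + 1))) :
    decyclingNumber G = ⌈((n : ℚ) + 1) / 2⌉₊ := by
  classical
  obtain ⟨e⟩ := hpath
  obtain ⟨hcyc, hedge⟩ := hdec
  set D : Fin (n + 1) → G.Subgraph := fun i => ((e.symm i : 𝒞) : G.Subgraph) with hDdef
  have hDmem : ∀ i, D i ∈ 𝒞 := fun i => (e.symm i).2
  have hDinj : Function.Injective D := by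
    intro i j hij
    exact e.symm.toEquiv.injective (Subtype.ext hij)
  have hDcyc : ∀ i, IsCycleSubgraph (D i) := fun i => hcyc _ (hDmem i)
  have hDsurj : ∀ C ∈ 𝒞, ∃ i, D i = C := by
    intro C hC
    refine ⟨e ⟨C, hC⟩, ?_⟩
    simp [hDdef]
  have hshare : ∀ i j : Fin (n + 1), i ≠ j → ((D i).verts ∩ (D j).verts).Nonempty →
      (i : ℕ) + 1 = (j : ℕ) ∨ (j : ℕ) + 1 = (i : ℕ) := by
    intro i j hij hne
    have hadj : (CIGraph G 𝒞).Adj (e.symm i) (e.symm j) :=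
      ⟨fun hE => hij (e.symm.toEquiv.injective hE), hne⟩
    rw [e.symm.map_adj_iff, SimpleGraph.pathGraph_adj] at hadj
    exact hadj
  have hshare' : ∀ i j : Fin (n + 1), (i : ℕ) + 1 = (j : ℕ) →
      ((D i).verts ∩ (D j).verts).Nonempty := by
    intro i j hij
    have h : (SimpleGraph.pathGraph (n+1)).Adj i j := SimpleGraph.pathGraph_adj.mpr (Or.inl hij)
    rw [← e.symm.map_adj_iff] at h
    exact h.2
  have hsingle : ∀ i j : Fin (n + 1), i ≠ j →
      ∀ x ∈ (D i).verts ∩ (D j).verts, ∀ y ∈ (D i).verts ∩ (D j).verts, x = y := by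
    intro i j hij x hx y hy
    have hle := hsimple (D i) (hDmem i) (D j) (hDmem j) (fun h => hij (hDinj h))
    exact (Set.ncard_le_one (Set.toFinite _)).mp hle x hx y hy
  have hEdge : ∀ {a b : V}, G.Adj a b → ∃ i : Fin (n + 1),
      (D i).Adj a b ∧ ∀ j, (D j).Adj a b → j = i := by
    intro a b hab
    obtain ⟨C, ⟨hC𝒞, hCe⟩, huniq⟩ := hedge s(a, b) hab
    obtain ⟨i, rfl⟩ := hDsurj C hC𝒞
    exact ⟨i, hCe, fun j hj => hDinj (huniq (D j) ⟨hDmem j, hj⟩)⟩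
  have hdeg2 : ∀ i, ∀ v ∈ (D i).verts, ((D i).neighborSet v).ncard = 2 := fun i => (hDcyc i).2
  -- upper bound
  have hupper : ∀ S : Set V, (∀ i, ∃ x, x ∈ S ∧ x ∈ (D i).verts) → IsDecyclingSet G S := by
    intro S hScov
    show (G.induce Sᶜ).IsAcyclic
    intro v0 c hc
    set F : G.induce Sᶜ ↪g G := SimpleGraph.Embedding.induce Sᶜ with hFdef
    set W := c.map F.toHom with hWdef
    have hW : W.IsCycle := (SimpleGraph.Walk.map_isCycle_iff_of_injective F.injective).mpr hc
    have hWS : ∀ x ∈ W.support, x ∉ S := by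
      intro x hx
      rw [hWdef, SimpleGraph.Walk.support_map] at hx
      obtain ⟨y, _, rfl⟩ := List.mem_map.mp hx
      exact y.2
    set m := W.length with hmdef
    have hm3 : 3 ≤ m := hW.three_le_length
    have hwrap : W.getVert m = W.getVert 0 := by
      rw [hmdef, SimpleGraph.Walk.getVert_length, SimpleGraph.Walk.getVert_zero]
    have hadjW : ∀ (t : ℕ) (ht : t < m), G.Adj (W.getVert t) (W.getVert (t + 1)) :=
      fun t ht => W.adj_getVert_succ ht
    set idx : ℕ → Fin (n + 1) := fun t =>
      if ht : t < m then (hEdge (hadjW t ht)).choose else 0 with hidxdef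
    have hidx : ∀ (t : ℕ) (ht : t < m),
        (D (idx t)).Adj (W.getVert t) (W.getVert (t + 1)) ∧
        ∀ j, (D j).Adj (W.getVert t) (W.getVert (t + 1)) → j = idx t := by
      intro t ht
      have hspec := (hEdge (hadjW t ht)).choose_spec
      rw [hidxdef]
      simp only [dif_pos ht]
      exact hspec
    have hconst : ∀ (t : ℕ), t < m → idx t = idx 0 := by
      by_contra hnc
      push_neg at hnc
      obtain ⟨b, hb, hbne⟩ := hnc
      have hFne : ((Finset.range m).image idx).Nonempty :=
        ⟨idx 0, Finset.mem_image.mpr ⟨0, Finset.mem_range.mpr (by omega), rfl⟩⟩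
      set M := ((Finset.range m).image idx).max' hFne with hMdef
      have hMle : ∀ (t : ℕ), t < m → (idx t : ℕ) ≤ (M : ℕ) := fun t ht =>
        Fin.le_def.mp (Finset.le_max' _ _ (Finset.mem_image.mpr ⟨t, Finset.mem_range.mpr ht, rfl⟩))
      have hcross : ∀ (s t : ℕ), s < m → t < m → W.getVert (s + 1) = W.getVert t →
          ¬(idx s = M ↔ idx t = M) →
          ∃ j : Fin (n + 1), (j : ℕ) + 1 = (M : ℕ) ∧
            W.getVert t ∈ (D j).verts ∧ W.getVert t ∈ (D M).verts := by
        intro s t hs ht hst hne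
        have hsne : idx s ≠ idx t := by
          intro h; rw [h] at hne; exact hne Iff.rfl
        have hv1 : W.getVert t ∈ (D (idx s)).verts := by
          have h1 := (hidx s hs).1.snd_mem
          rwa [hst] at h1
        have hv2 : W.getVert t ∈ (D (idx t)).verts := (hidx t ht).1.fst_mem
        have hadj2 := hshare _ _ hsne ⟨_, hv1, hv2⟩
        have hles : (idx s : ℕ) ≤ (M : ℕ) := hMle s hs
        have hlet : (idx t : ℕ) ≤ (M : ℕ) := hMle t ht
        by_cases hsM : idx s = M
        · have htM : idx t ≠ M := by
            intro h
            exact hne (by rw [hsM, h])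
          have hvalne : (idx t : ℕ) ≠ (M : ℕ) := fun h => htM (Fin.ext h)
          have hvs : (idx s : ℕ) = (M : ℕ) := by rw [hsM]
          refine ⟨idx t, by omega, hv2, ?_⟩
          rwa [← hsM]
        · have htM : idx t = M := by
            by_contra htM
            exact hne (iff_of_false hsM htM)
          have hvalne : (idx s : ℕ) ≠ (M : ℕ) := fun h => hsM (Fin.ext h)
          have hvt : (idx t : ℕ) = (M : ℕ) := by rw [htM]
          refine ⟨idx s, by omega, hv1, ?_⟩
          rwa [← htM]
      have hstat : ∃ t : ℕ, t < m ∧ ¬(idx t = M ↔ idx 0 = M) := by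
        obtain ⟨a', ha', haM⟩ : ∃ a', a' < m ∧ idx a' = M := by
          obtain ⟨a', ha1, ha2⟩ := Finset.mem_image.mp (Finset.max'_mem _ hFne)
          exact ⟨a', Finset.mem_range.mp ha1, ha2⟩
        by_cases h0 : idx 0 = M
        · refine ⟨b, hb, ?_⟩
          simp only [h0, iff_true]
          intro hbM
          exact hbne (by rw [hbM, ← h0])
        · exact ⟨a', ha', by simp [haM, h0]⟩
      obtain ⟨t1, ht1m, ht1ne, ht1min⟩ : ∃ t1, t1 < m ∧ ¬(idx t1 = M ↔ idx 0 = M) ∧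
          ∀ s, s < t1 → (idx s = M ↔ idx 0 = M) := by
        refine ⟨Nat.find hstat, (Nat.find_spec hstat).1, (Nat.find_spec hstat).2, ?_⟩
        intro s hs
        by_contra hne2
        exact Nat.find_min hstat hs ⟨lt_trans hs (Nat.find_spec hstat).1, hne2⟩
      have ht1pos : 1 ≤ t1 := by
        rcases Nat.eq_zero_or_pos t1 with h | h
        · exfalso
          rw [h] at ht1ne
          exact ht1ne Iff.rfl
        · exact h
      have hprev : idx (t1 - 1) = M ↔ idx 0 = M := ht1min (t1 - 1) (by omega)
      have hc1 : ¬(idx (t1 - 1) = M ↔ idx t1 = M) := by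
        intro hif
        exact ht1ne (hif.symm.trans hprev)
      obtain ⟨j1, hj1, hx1a, hx1b⟩ := hcross (t1 - 1) t1 (by omega) ht1m
        (by rw [Nat.sub_add_cancel ht1pos]) hc1
      have hMne : j1 ≠ M := by
        intro h
        rw [h] at hj1
        omega
      by_cases hlast : idx (m - 1) = M ↔ idx 0 = M
      · obtain ⟨t2, ht2Q, ht2le, ht2ge, ht2gr⟩ : ∃ t2, ¬(idx t2 = M ↔ idx 0 = M) ∧
            t2 ≤ m - 1 ∧ t1 ≤ t2 ∧ ∀ k, t2 < k → k ≤ m - 1 → (idx k = M ↔ idx 0 = M) := by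
          have hle1 : t1 ≤ m - 1 := by omega
          have hA : (fun t => ¬(idx t = M ↔ idx 0 = M)) (Nat.findGreatest (fun t => ¬(idx t = M ↔ idx 0 = M)) (m - 1)) :=
            Nat.findGreatest_spec (P := fun t => ¬(idx t = M ↔ idx 0 = M)) hle1 ht1ne
          have hB := Nat.findGreatest_le (P := fun t => ¬(idx t = M ↔ idx 0 = M)) (m - 1)
          have hC : t1 ≤ Nat.findGreatest (fun t => ¬(idx t = M ↔ idx 0 = M)) (m - 1) :=
            Nat.le_findGreatest (P := fun t => ¬(idx t = M ↔ idx 0 = M)) hle1 ht1ne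
          refine ⟨Nat.findGreatest (fun t => ¬(idx t = M ↔ idx 0 = M)) (m - 1), hA, hB, hC, ?_⟩
          intro k hk1 hk2
          by_contra hne2
          exact Nat.findGreatest_is_greatest (P := fun t => ¬(idx t = M ↔ idx 0 = M)) hk1 hk2 hne2
        have ht2ne : t2 ≠ m - 1 := by
          intro h
          rw [h] at ht2Q
          exact ht2Q hlast
        have ht2next : idx (t2 + 1) = M ↔ idx 0 = M := ht2gr (t2 + 1) (by omega) (by omega)
        have hc2 : ¬(idx t2 = M ↔ idx (t2 + 1) = M) := by
          intro hif
          exact ht2Q (hif.trans ht2next)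
        obtain ⟨j2, hj2, hx2a, hx2b⟩ := hcross t2 (t2 + 1) (by omega) (by omega) rfl hc2
        have hj12 : j1 = j2 := Fin.ext (by omega)
        have hx2a' : W.getVert (t2 + 1) ∈ (D j1).verts := by rw [hj12]; exact hx2a
        have heq := hsingle j1 M hMne _ ⟨hx1a, hx1b⟩ _ ⟨hx2a', hx2b⟩
        have hfin := CIAux.cycle_getVert_inj hW (by omega) (by omega) (by omega) (by omega) heq
        omega
      · have hc0 : ¬(idx (m - 1) = M ↔ idx 0 = M) := hlast
        obtain ⟨j0', hj0', hx0a, hx0b⟩ := hcross (m - 1) 0 (by omega) (by omega)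
          (by rw [Nat.sub_add_cancel (by omega : 1 ≤ m), hwrap]) hc0
        have hj10 : j1 = j0' := Fin.ext (by omega)
        have hx0a' : W.getVert 0 ∈ (D j1).verts := by rw [hj10]; exact hx0a
        have heq := hsingle j1 M hMne _ ⟨hx1a, hx1b⟩ _ ⟨hx0a', hx0b⟩
        have heq' : W.getVert t1 = W.getVert m := by rw [hwrap]; exact heq
        have hfin := CIAux.cycle_getVert_inj hW (by omega) (by omega) (by omega) (by omega) heq'
        omega
    have hedgein : ∀ (t : ℕ) (ht : t < m), (D (idx 0)).Adj (W.getVert t) (W.getVert (t + 1)) := by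
      intro t ht
      have h1 := (hidx t ht).1
      rwa [hconst t ht] at h1
    have hsupp : ∀ x ∈ W.support, x ∈ (D (idx 0)).verts ∧
        ∀ y ∈ (D (idx 0)).neighborSet x, y ∈ W.support := by
      intro x hx
      obtain ⟨t0, ht0eq, ht0le⟩ := SimpleGraph.Walk.mem_support_iff_exists_getVert.mp hx
      obtain ⟨t, ht, hteq⟩ : ∃ t, t < m ∧ W.getVert t = x := by
        rcases Nat.lt_or_ge t0 m with h | h
        · exact ⟨t0, h, ht0eq⟩
        · have h0 : t0 = m := by omega
          refine ⟨0, by omega, ?_⟩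
          rw [← hwrap, ← h0]
          exact ht0eq
      subst hteq
      have hxvert : W.getVert t ∈ (D (idx 0)).verts := (hedgein t ht).fst_mem
      refine ⟨hxvert, ?_⟩
      have hmemsup : ∀ (r : ℕ), r ≤ m → W.getVert r ∈ W.support := by
        intro r hr
        exact SimpleGraph.Walk.mem_support_iff_exists_getVert.mpr ⟨r, rfl, by omega⟩
      have hkey : ∃ a b : V, a ≠ b ∧ (D (idx 0)).Adj (W.getVert t) a ∧
          (D (idx 0)).Adj (W.getVert t) b ∧ a ∈ W.support ∧ b ∈ W.support := by
        by_cases ht0 : t = 0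
        · subst ht0
          refine ⟨W.getVert 1, W.getVert (m - 1), ?_, ?_, ?_,
            hmemsup 1 (by omega), hmemsup (m - 1) (by omega)⟩
          · intro h
            have := CIAux.cycle_getVert_inj hW (by omega) (by omega) (by omega) (by omega) h
            omega
          · exact hedgein 0 (by omega)
          · have h1 := (hedgein (m - 1) (by omega)).symm
            rw [Nat.sub_add_cancel (by omega : 1 ≤ m), hwrap] at h1
            exact h1
        · refine ⟨W.getVert (t + 1), W.getVert (t - 1), ?_, hedgein t ht, ?_,
            hmemsup (t + 1) (by omega), hmemsup (t - 1) (by omega)⟩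
          · intro h
            by_cases ht1 : t = 1
            · subst ht1
              rw [show (1 : ℕ) - 1 = 0 from rfl, ← hwrap] at h
              have := CIAux.cycle_getVert_inj hW (by omega) (by omega) (by omega) (by omega) h
              omega
            · have := CIAux.cycle_getVert_inj hW (by omega) (by omega) (by omega) (by omega) h
              omega
          · have h1 := (hedgein (t - 1) (by omega)).symm
            rw [Nat.sub_add_cancel (by omega : 1 ≤ t)] at h1
            exact h1
      obtain ⟨a, b, hab, hxa, hxb, haS, hbS⟩ := hkey
      have hnb : (D (idx 0)).neighborSet (W.getVert t) = {a, b} := by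
        symm
        apply Set.eq_of_subset_of_ncard_le
        · intro z hz
          simp only [Set.mem_insert_iff, Set.mem_singleton_iff] at hz
          rcases hz with rfl | rfl
          · exact hxa
          · exact hxb
        · rw [hdeg2 _ _ hxvert, Set.ncard_pair hab]
        · exact Set.toFinite _
      intro y hy
      rw [hnb] at hy
      simp only [Set.mem_insert_iff, Set.mem_singleton_iff] at hy
      rcases hy with rfl | rfl
      · exact haS
      · exact hbS
    have hsupp2 : ∀ (x y : ↥(D (idx 0)).verts) (p : (D (idx 0)).coe.Walk x y),
        x.1 ∈ W.support → y.1 ∈ W.support := by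
      intro x y p
      induction p with
      | nil => exact id
      | cons h q ih =>
        intro hx
        apply ih
        exact (hsupp _ hx).2 _ h
    obtain ⟨sv, hsvS, hsvD⟩ := hScov (idx 0)
    have hstartmem : W.getVert 0 ∈ W.support := by
      rw [SimpleGraph.Walk.getVert_zero]
      exact W.start_mem_support
    have hstartvert : W.getVert 0 ∈ (D (idx 0)).verts := (hsupp _ hstartmem).1
    obtain ⟨p⟩ := ((hDcyc (idx 0)).1) ⟨W.getVert 0, hstartvert⟩ ⟨sv, hsvD⟩
    have hsvsup : sv ∈ W.support := hsupp2 _ _ p hstartmem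
    exact hWS sv hsvsup hsvS
  -- lower bound: every decycling set hits every cycle
  have hlower : ∀ S : Set V, IsDecyclingSet G S → ∀ i, ∃ x, x ∈ S ∧ x ∈ (D i).verts := by
    intro S hS i
    by_contra hno
    push_neg at hno
    have hsub : (D i).verts ⊆ Sᶜ := fun x hx hxS => hno x hxS hx
    obtain ⟨v, c, hc⟩ : ∃ (v : ↥(D i).verts) (c : (D i).coe.Walk v v), c.IsCycle := by
      have hna := CIAux.not_acyclic_of_cycleSubgraph (hDcyc i)
      simp only [SimpleGraph.IsAcyclic] at hna
      push_neg at hna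
      exact hna
    let f : (D i).coe →g G.induce Sᶜ :=
      { toFun := fun x => ⟨x.1, hsub x.2⟩,
        map_rel' := by
          intro a b hab
          show (G.induce Sᶜ).Adj ⟨a.1, hsub a.2⟩ ⟨b.1, hsub b.2⟩
          rw [SimpleGraph.comap_adj]
          exact SimpleGraph.Subgraph.Adj.adj_sub hab }
    have hfinj : Function.Injective f := by
      intro x y hxy
      rw [Subtype.ext_iff] at hxy ⊢
      exact hxy
    have hcyc' : (c.map f).IsCycle :=
      (SimpleGraph.Walk.map_isCycle_iff_of_injective hfinj).mpr hc
    exact hS _ hcyc'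
  have hcount : ∀ S : Set V, (∀ i, ∃ x, x ∈ S ∧ x ∈ (D i).verts) → n + 1 ≤ 2 * S.ncard := by
    intro S hScov
    choose g hgS hgD using hScov
    have hfib : ∀ a ∈ Finset.univ.image g,
        ((Finset.univ : Finset (Fin (n + 1))).filter (fun i => g i = a)).card ≤ 2 := by
      intro a _
      by_contra hgt
      push_neg at hgt
      obtain ⟨i1, i2, i3, hi1, hi2, hi3, h12, h13, h23⟩ := Finset.two_lt_card_iff.mp hgt
      simp only [Finset.mem_filter, Finset.mem_univ, true_and] at hi1 hi2 hi3
      have hm12 : ((D i1).verts ∩ (D i2).verts).Nonempty :=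
        ⟨a, by rw [← hi1]; exact hgD i1, by rw [← hi2]; exact hgD i2⟩
      have hm13 : ((D i1).verts ∩ (D i3).verts).Nonempty :=
        ⟨a, by rw [← hi1]; exact hgD i1, by rw [← hi3]; exact hgD i3⟩
      have hm23 : ((D i2).verts ∩ (D i3).verts).Nonempty :=
        ⟨a, by rw [← hi2]; exact hgD i2, by rw [← hi3]; exact hgD i3⟩
      have hs12 := hshare i1 i2 h12 hm12
      have hs13 := hshare i1 i3 h13 hm13
      have hs23 := hshare i2 i3 h23 hm23
      have hne12 : (i1 : ℕ) ≠ (i2 : ℕ) := fun h => h12 (Fin.ext h)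
      have hne13 : (i1 : ℕ) ≠ (i3 : ℕ) := fun h => h13 (Fin.ext h)
      have hne23 : (i2 : ℕ) ≠ (i3 : ℕ) := fun h => h23 (Fin.ext h)
      omega
    have hmain := Finset.card_le_mul_card_image (Finset.univ : Finset (Fin (n + 1))) 2 hfib
    have himg : (Finset.univ.image g).card ≤ S.ncard := by
      rw [Set.ncard_eq_toFinset_card']
      apply Finset.card_le_card
      intro a ha
      obtain ⟨i, _, rfl⟩ := Finset.mem_image.mp ha
      exact Set.mem_toFinset.mpr (hgS i)
    have huniv : (Finset.univ : Finset (Fin (n + 1))).card = n + 1 := by simp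
    omega
  have hconstruct : ∃ S : Set V, (∀ i, ∃ x, x ∈ S ∧ x ∈ (D i).verts) ∧ S.ncard = (n + 2) / 2 := by
    have hwex : ∀ (j : ℕ) (hj : 2 * j < n),
        ((D ⟨2 * j, by omega⟩).verts ∩ (D ⟨2 * j + 1, by omega⟩).verts).Nonempty := by
      intro j hj
      exact hshare' ⟨2 * j, by omega⟩ ⟨2 * j + 1, by omega⟩ rfl
    choose w hw using hwex
    obtain ⟨x, hx⟩ : ∃ x, x ∈ (D ⟨n, by omega⟩).verts := (hDcyc ⟨n, by omega⟩).1.nonempty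
    set K := (n + 2) / 2 with hK
    set f : ℕ → V := fun j => if hj : 2 * j < n then w j hj else x with hf
    have hfw : ∀ j (hj : 2 * j < n), f j ∈ (D ⟨2 * j, by omega⟩).verts ∧
        f j ∈ (D ⟨2 * j + 1, by omega⟩).verts := by
      intro j hj
      have := hw j hj
      rw [hf]
      simp only [dif_pos hj]
      exact this
    have hfx : ∀ j, ¬ (2 * j < n) → f j = x := by
      intro j hj
      rw [hf]
      simp only [dif_neg hj]
    -- membership in a single cycle, for disambiguation
    have hfmem : ∀ (j : ℕ) (hj : 2 * j ≤ n), f j ∈ (D ⟨2 * j, by omega⟩).verts := by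
      intro j hj
      by_cases h : 2 * j < n
      · exact (hfw j h).1
      · have h2 : 2 * j = n := by omega
        rw [hfx j h]
        have : (⟨2 * j, by omega⟩ : Fin (n + 1)) = ⟨n, by omega⟩ := by
          apply Fin.ext; simpa using h2
        rw [this]
        exact hx
    refine ⟨f '' (Set.Iio K), ?_, ?_⟩
    · intro i
      set j := (i : ℕ) / 2 with hj
      have hij : (i : ℕ) = 2 * j ∨ (i : ℕ) = 2 * j + 1 := by omega
      have hiK : j < K := by
        have := i.2
        omega
      refine ⟨f j, Set.mem_image_of_mem f hiK, ?_⟩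
      by_cases h : 2 * j < n
      · rcases hij with h' | h'
        · have : i = (⟨2 * j, by omega⟩ : Fin (n + 1)) := by apply Fin.ext; simpa using h'
          rw [this]; exact (hfw j h).1
        · have : i = (⟨2 * j + 1, by omega⟩ : Fin (n + 1)) := by apply Fin.ext; simpa using h'
          rw [this]; exact (hfw j h).2
      · have h2 : (i : ℕ) = 2 * j := by
          have := i.2; omega
        have : i = (⟨2 * j, by omega⟩ : Fin (n + 1)) := by apply Fin.ext; simpa using h2
        rw [this]
        exact hfmem j (by have := i.2; omega)
    · -- cardinality
      have hinj : Set.InjOn f (Set.Iio K) := by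
        intro j hjK j' hjK' hff
        simp only [Set.mem_Iio] at hjK hjK'
        by_contra hne
        have hj2 : 2 * j ≤ n := by omega
        have hj2' : 2 * j' ≤ n := by omega
        have h1 := hfmem j hj2
        have h2 := hfmem j' hj2'
        rw [hff] at h1
        have hnefin : (⟨2 * j, by omega⟩ : Fin (n + 1)) ≠ ⟨2 * j', by omega⟩ := by
          intro h
          have hval : 2 * j = 2 * j' := congrArg Fin.val h
          omega
        have hres : 2 * j + 1 = 2 * j' ∨ 2 * j' + 1 = 2 * j :=
          hshare _ _ hnefin ⟨f j', h1, h2⟩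
        omega
      rw [Set.ncard_image_of_injOn hinj, ← Finset.coe_range, Set.ncard_coe_finset,
        Finset.card_range]
  have harith : ⌈((n : ℚ) + 1) / 2⌉₊ = (n + 2) / 2 := by
    have h2 : ((n : ℚ) + 1) / 2 = ((n + 1 : ℕ) : ℚ) / 2 := by push_cast; ring
    rw [h2, Nat.ceil_eq_iff (by omega : (n + 2) / 2 ≠ 0)]
    have hq2 : ((n + 2) / 2 - 1) * 2 < n + 1 := by omega
    have hq1 : n + 1 ≤ ((n + 2) / 2) * 2 := by omega
    constructor
    · rw [lt_div_iff₀ (by norm_num : (0:ℚ) < 2)]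
      exact_mod_cast hq2
    · rw [div_le_iff₀ (by norm_num : (0:ℚ) < 2)]
      exact_mod_cast hq1
  rw [harith]
  obtain ⟨S₀, hS₀cov, hS₀card⟩ := hconstruct
  have hmem : (n + 2) / 2 ∈ {k | ∃ S : Set V, IsDecyclingSet G S ∧ S.ncard = k} :=
    ⟨S₀, hupper S₀ hS₀cov, hS₀card⟩
  refine le_antisymm (Nat.sInf_le hmem) (le_csInf ⟨_, hmem⟩ ?_)
  rintro m ⟨S, hS, rfl⟩
  have := hcount S (hlower S hS)
  omega
end

section
/- Let G be a connected even graph and let 𝒞 be a cycle decomposition of G whose cycle intersection graph CI(G) is simple (any two cycles of 𝒞 intersect in at most one vertex). Then for every spanning tree T of CI(G), ∇(G) ≤ (|E(CI(G))| − |V(CI(G))| + 1) + |MSF(T)|; that is, G can be decycled by removing the intersection vertices of G corresponding to the |E(CI(G))| − |V(CI(G))| + 1 edges deleted from CI(G) to obtain T, and then removing a set of vertices corresponding to a minimum spanning forest of the resulting tree. -/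
open SimpleGraph

variable {V : Type*}

namespace CIA
variable {G : SimpleGraph V}

lemma exists_getLast_dart {u v : V} (q : G.Walk u v) (hq : ¬ q.Nil) :
    ∃ d : G.Dart, d.snd = v ∧ q.darts.getLast? = some d := by
  induction q with
  | nil => simp at hq
  | @cons a b c h q ih =>
    by_cases h' : q.Nil
    · cases q with
      | nil => exact ⟨⟨(a, b), h⟩, rfl, rfl⟩
      | cons h'' q' => exact absurd h' SimpleGraph.Walk.not_nil_cons
    · obtain ⟨d, hd1, hd2⟩ := ih h'
      refine ⟨d, hd1, ?_⟩
      rw [SimpleGraph.Walk.darts_cons]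
      obtain ⟨e, l, hel⟩ := List.exists_cons_of_ne_nil
        (l := q.darts) (by
          intro hnil
          have := congrArg List.length hnil
          simp [SimpleGraph.Walk.length_darts] at this
          exact h' this)
      rw [hel] at hd2 ⊢
      rw [List.getLast?_cons_cons]
      exact hd2

lemma end_not_mem_dropLast_edges :
    ∀ {a b : V} (q : G.Walk a b), q.support.Nodup → ∀ e ∈ q.edges.dropLast, b ∉ e := by
  intro a b q
  induction q with
  | nil => intro _ e he; simp [SimpleGraph.Walk.edges_nil] at he
  | @cons a a' c h q ih =>
    intro hnd e he
    by_cases hnil : q.Nil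
    · cases q with
      | nil => simp [SimpleGraph.Walk.edges_cons, SimpleGraph.Walk.edges_nil] at he
      | cons h'' q' => exact absurd hnil SimpleGraph.Walk.not_nil_cons
    · obtain ⟨e0, l, hel⟩ := List.exists_cons_of_ne_nil (l := q.edges) (by
        intro hnil'
        have := congrArg List.length hnil'
        simp [SimpleGraph.Walk.length_edges] at this
        exact hnil this)
      rw [SimpleGraph.Walk.support_cons, List.nodup_cons] at hnd
      rw [SimpleGraph.Walk.edges_cons, hel, List.dropLast_cons₂, List.mem_cons, ← hel] at he
      rcases he with rfl | he
      · have hc : c ∈ q.support := SimpleGraph.Walk.end_mem_support q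
        have hca : c ≠ a := by rintro rfl; exact hnd.1 hc
        have hca' : c ≠ a' := by
          rintro rfl
          obtain ⟨u', h2, q2, rfl⟩ := SimpleGraph.Walk.not_nil_iff.mp hnil
          have : c ∈ q2.support := SimpleGraph.Walk.end_mem_support q2
          rw [SimpleGraph.Walk.support_cons, List.nodup_cons] at hnd
          exact hnd.2.1 this
        simp [hca, hca']
      · exact ih hnd.2 e he

lemma edge_of_endpoint_mem {x b : V} (h : G.Adj x b) {q : G.Walk b x}
    (hnd : q.support.Nodup) {e : Sym2 V}
    (he : e ∈ (SimpleGraph.Walk.cons h q).edges) (hx : x ∈ e) {dL : G.Dart}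
    (hdL : q.darts.getLast? = some dL) :
    e = s(x, b) ∨ e = dL.edge := by
  rw [SimpleGraph.Walk.edges_cons, List.mem_cons] at he
  rcases he with rfl | he
  · exact Or.inl rfl
  · right
    have hlast : q.edges.getLast? = some dL.edge := by
      have : q.edges = q.darts.map SimpleGraph.Dart.edge := rfl
      rw [this, List.getLast?_map, hdL]; rfl
    have hsplit := List.dropLast_append_getLast? _ hlast
    rw [← hsplit, List.mem_append, List.mem_singleton] at he
    rcases he with he | he
    · exact absurd hx (end_not_mem_dropLast_edges q hnd e he)
    · exact he

lemma cycle_exists_two_edges [DecidableEq V] {u : V} {p : G.Walk u u}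
    (hp : p.IsCycle) {w : V} (hw : w ∈ p.support) :
    ∃ a c : V, a ≠ c ∧ s(w, a) ∈ p.edges ∧ s(w, c) ∈ p.edges := by
  set p' := p.rotate _ hw with hp'def
  have hp'c : p'.IsCycle := hp.rotate hw
  have hmem : ∀ e, e ∈ p'.edges ↔ e ∈ p.edges :=
    fun e => (SimpleGraph.Walk.rotate_edges p _ hw).perm.mem_iff
  obtain ⟨b, hadj, q, hq⟩ := SimpleGraph.Walk.not_nil_iff.mp hp'c.not_nil
  have hqcyc := hq ▸ hp'c
  rw [SimpleGraph.Walk.cons_isCycle_iff] at hqcyc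
  have hqnil : ¬ q.Nil := by
    have h3 := hp'c.three_le_length
    rw [hq, SimpleGraph.Walk.length_cons] at h3
    rw [SimpleGraph.Walk.nil_iff_length_eq]
    omega
  obtain ⟨dL, hdL1, hdL2⟩ := exists_getLast_dart q hqnil
  have hdq : dL.edge ∈ q.edges := by
    have : dL ∈ q.darts := List.mem_of_getLast? hdL2
    exact List.mem_map_of_mem this
  have hedL : dL.edge = s(w, dL.fst) := by
    have h1 : dL.edge = s(dL.fst, dL.snd) := rfl
    rw [h1, hdL1, Sym2.eq_swap]
  refine ⟨b, dL.fst, ?_, ?_, ?_⟩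
  · intro heq
    refine hqcyc.2 ?_
    rw [← heq] at hedL
    exact hedL ▸ hdq
  · rw [← hmem, hq, SimpleGraph.Walk.edges_cons]; exact List.mem_cons_self
  · rw [← hmem, hq, SimpleGraph.Walk.edges_cons]
    exact List.mem_cons_of_mem _ (hedL ▸ hdq)

lemma chain_reachable {W : Type*} (T' : SimpleGraph W)
    (f : Sym2 V → W) (P : V → Prop)
    (step : ∀ ⦃a w z : V⦄, G.Adj a w → G.Adj w z → P w →
      T'.Reachable (f s(a, w)) (f s(w, z))) :
    ∀ {x y : V} (q : G.Walk x y), q.support.Nodup →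
      (∀ w ∈ q.support, w ≠ x → w ≠ y → P w) →
      ∀ d₁ ∈ q.darts.head?, ∀ d₂ ∈ q.darts.getLast?,
        T'.Reachable (f d₁.edge) (f d₂.edge) := by
  intro x y q
  induction q with
  | nil => intro _ _ d₁ h₁; simp [SimpleGraph.Walk.darts_nil] at h₁
  | @cons a b c h q ih =>
    intro hnd hP d₁ h₁ d₂ h₂
    rw [SimpleGraph.Walk.support_cons, List.nodup_cons] at hnd
    cases q with
    | nil =>
      simp only [SimpleGraph.Walk.darts_cons, SimpleGraph.Walk.darts_nil] at h₁ h₂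
      simp only [List.head?_cons, Option.mem_def, Option.some.injEq] at h₁
      simp only [List.getLast?_singleton, Option.mem_def, Option.some.injEq] at h₂
      rw [← h₁, ← h₂]
    | @cons b b2 c h' q2 =>
      have hbsup : b ∈ (SimpleGraph.Walk.cons h' q2).support :=
        SimpleGraph.Walk.start_mem_support _
      have hPb : P b := by
        have hba : b ≠ a := fun hba => hnd.1 (hba ▸ hbsup)
        have hbc : b ≠ c := by
          rintro rfl
          have : b ∈ q2.support := SimpleGraph.Walk.end_mem_support q2
          rw [SimpleGraph.Walk.support_cons, List.nodup_cons] at hnd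
          exact hnd.2.1 this
        exact hP b (by rw [SimpleGraph.Walk.support_cons]; exact List.mem_cons_of_mem _ hbsup) hba hbc
      have hstep1 : T'.Reachable (f s(a, b)) (f s(b, b2)) := step h h' hPb
      have hd₁ : d₁ = SimpleGraph.Dart.mk (a, b) h := by
        simp only [SimpleGraph.Walk.darts_cons, List.head?_cons, Option.mem_def,
          Option.some.injEq] at h₁
        exact h₁.symm
      have h₂' : d₂ ∈ (SimpleGraph.Walk.cons h' q2).darts.getLast? := by
        rw [SimpleGraph.Walk.darts_cons] at h₂
        rw [SimpleGraph.Walk.darts_cons] at h₂ ⊢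
        rwa [List.getLast?_cons_cons] at h₂
      have ihr := ih hnd.2 (fun w hw hwb hwc => hP w
          (by rw [SimpleGraph.Walk.support_cons]; exact List.mem_cons_of_mem _ hw)
          (fun hwa => hnd.1 (hwa ▸ hw)) hwc)
        (SimpleGraph.Dart.mk (b, b2) h') (by
          rw [SimpleGraph.Walk.darts_cons]; rfl) d₂ h₂'
      rw [hd₁]
      exact hstep1.trans ihr

lemma verts_subset_support [Finite V] [DecidableEq V] {C : G.Subgraph}
    (hCc : C.Connected) (hC2 : ∀ v ∈ C.verts, (C.neighborSet v).ncard = 2)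
    {u : V} {p : G.Walk u u} (hp : p.IsCycle)
    (hedges : ∀ e ∈ p.edges, e ∈ C.edgeSet) :
    ∀ x ∈ C.verts, x ∈ p.support := by
  have hclosed : ∀ w ∈ p.support, ∀ z, C.Adj w z → z ∈ p.support := by
    intro w hw z hz
    obtain ⟨a, c, hac, ha, hc⟩ := cycle_exists_two_edges hp hw
    have haC : C.Adj w a := SimpleGraph.Subgraph.mem_edgeSet.mp (hedges _ ha)
    have hcC : C.Adj w c := SimpleGraph.Subgraph.mem_edgeSet.mp (hedges _ hc)
    have hsub : ({a, c} : Set V) ⊆ C.neighborSet w := by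
      rintro x (rfl | rfl)
      exacts [haC, hcC]
    have heq : ({a, c} : Set V) = C.neighborSet w := by
      refine Set.eq_of_subset_of_ncard_le hsub ?_ (Set.toFinite _)
      rw [hC2 w haC.fst_mem, Set.ncard_pair hac]
    have hzmem : z ∈ ({a, c} : Set V) := heq ▸ (hz : z ∈ C.neighborSet w)
    rcases hzmem with rfl | rfl
    · exact SimpleGraph.Walk.snd_mem_support_of_mem_edges p ha
    · exact SimpleGraph.Walk.snd_mem_support_of_mem_edges p hc
  obtain ⟨b, hadj, q, hq⟩ := SimpleGraph.Walk.not_nil_iff.mp hp.not_nil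
  have hfirst : s(u, b) ∈ p.edges := by
    rw [hq, SimpleGraph.Walk.edges_cons]; exact List.mem_cons_self
  have huC : u ∈ C.verts := (SimpleGraph.Subgraph.mem_edgeSet.mp (hedges _ hfirst)).fst_mem
  have key : ∀ (a b : ↥C.verts) (ω : C.coe.Walk a b), ↑a ∈ p.support → ↑b ∈ p.support := by
    intro a b ω
    induction ω with
    | nil => exact id
    | cons hadj ω ih =>
      intro ha
      exact ih (hclosed _ ha _ hadj)
  intro x hx
  obtain ⟨ω⟩ := hCc.coe ⟨u, huC⟩ ⟨x, hx⟩
  exact key _ _ ω (SimpleGraph.Walk.start_mem_support p)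

lemma chain'_all_eq {α β : Type*} (f : α → β) (l : List α)
    (h : List.Chain' (fun a b => f a = f b) l) {a0 : α} (h0 : l.head? = some a0) :
    ∀ a ∈ l, f a = f a0 := by
  letI : IsTrans α (fun a b => f a = f b) := ⟨fun _ _ _ h1 h2 => h1.trans h2⟩
  unfold List.Chain' at h
  rw [List.isChain_iff_pairwise] at h
  cases l with
  | nil => simp at h0
  | cons x l =>
    simp only [List.head?_cons, Option.some.injEq] at h0
    subst h0
    intro a ha
    rcases List.mem_cons.mp ha with rfl | ha
    · rfl
    · exact (List.rel_of_pairwise_cons h ha).symm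

open Classical in
noncomputable def lbl [Nonempty V] (C D : G.Subgraph) : V :=
  if h : (C.verts ∩ D.verts).Nonempty then h.choose else Classical.arbitrary V

open Classical in
lemma lbl_comm [Nonempty V] (C D : G.Subgraph) : lbl C D = lbl D C := by
  unfold lbl
  rw [Set.inter_comm]

open Classical in
lemma lbl_mem [Nonempty V] {C D : G.Subgraph} (h : (C.verts ∩ D.verts).Nonempty) :
    lbl C D ∈ C.verts ∩ D.verts := by
  rw [lbl, dif_pos h]
  exact h.choose_spec

lemma lbl_eq [Nonempty V] [Finite V] {𝒞 : Set G.Subgraph} (hs : CISimple G 𝒞)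
    {C D : G.Subgraph} (hC : C ∈ 𝒞) (hD : D ∈ 𝒞) (hne : C ≠ D) {v : V}
    (hv : v ∈ C.verts ∩ D.verts) : lbl C D = v := by
  have h1 : lbl C D ∈ C.verts ∩ D.verts := lbl_mem ⟨v, hv⟩
  exact (Set.ncard_le_one (Set.toFinite _)).mp (hs C hC D hD hne) _ h1 _ hv

open Classical in
noncomputable def vtx [Nonempty V] (C : G.Subgraph) : V :=
  if h : C.verts.Nonempty then h.choose else Classical.arbitrary V

open Classical in
lemma vtx_mem [Nonempty V] {C : G.Subgraph} (h : C.verts.Nonempty) : vtx C ∈ C.verts := by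
  rw [vtx, dif_pos h]
  exact h.choose_spec

open Classical in
noncomputable def cOf (G : SimpleGraph V) (𝒞 : Set G.Subgraph) (e : Sym2 V) : G.Subgraph :=
  if h : ∃ C, C ∈ 𝒞 ∧ e ∈ C.edgeSet then h.choose else ⊥

open Classical in
lemma cOf_mem {𝒞 : Set G.Subgraph} (hdec : IsCycleDecomposition G 𝒞) {e : Sym2 V}
    (he : e ∈ G.edgeSet) : cOf G 𝒞 e ∈ 𝒞 ∧ e ∈ (cOf G 𝒞 e).edgeSet := by
  obtain ⟨C, hC, -⟩ := hdec.2 e he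
  rw [cOf, dif_pos ⟨C, hC⟩]
  exact (Exists.choose_spec (⟨C, hC⟩ : ∃ C, C ∈ 𝒞 ∧ e ∈ C.edgeSet))

open Classical in
lemma cOf_eq {𝒞 : Set G.Subgraph} (hdec : IsCycleDecomposition G 𝒞) {e : Sym2 V}
    {C : G.Subgraph} (hC : C ∈ 𝒞) (heC : e ∈ C.edgeSet) : cOf G 𝒞 e = C := by
  have he : e ∈ G.edgeSet := C.edgeSet_subset heC
  obtain ⟨C', hC', huniq⟩ := hdec.2 e he
  have h1 := cOf_mem hdec he
  rw [huniq _ h1, huniq _ ⟨hC, heC⟩]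

lemma finite_subgraph [Finite V] (G : SimpleGraph V) : Finite G.Subgraph := by
  refine Finite.of_injective
    (fun H : G.Subgraph => (H.verts, {p : V × V | H.Adj p.1 p.2})) ?_
  intro H1 H2 h
  have h1 : H1.verts = H2.verts := congrArg Prod.fst h
  have h2 : {p : V × V | H1.Adj p.1 p.2} = {p : V × V | H2.Adj p.1 p.2} := congrArg Prod.snd h
  ext x y
  · rw [h1]
  · constructor
    · intro hx; exact (Set.ext_iff.mp h2 (x, y)).mp hx
    · intro hx; exact (Set.ext_iff.mp h2 (x, y)).mpr hx

end CIA

/-- Let `G` be a connected even graph with a cycle decomposition `𝒞` whose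
cycle intersection graph is simple.  Then for every spanning tree `T` of `CI(G)`,
`∇(G) ≤ (|E(CI(G))| − |V(CI(G))| + 1) + |MSF(T)|`: removing the intersection vertices
corresponding to the `|E(CI(G))| − |V(CI(G))| + 1` edges deleted from `CI(G)` to obtain `T`
and then a vertex set corresponding to a minimum spanning forest of `T` decycles `G`.
(The cycle rank is written `|E| + 1 - |V|` to avoid truncated subtraction.) -/
theorem decyclingNumber_le_cycleRank_add_MSF_of_CISimple [Fintype V]
    (G : SimpleGraph V) (hconn : G.Connected) (heven : IsEvenGraph G)
    (𝒞 : Set G.Subgraph) (hdec : IsCycleDecomposition G 𝒞)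
    (hsimple : CISimple G 𝒞) :
    ∀ T : SimpleGraph 𝒞, T ≤ CIGraph G 𝒞 → T.IsTree →
      decyclingNumber G ≤
        ((CIGraph G 𝒞).edgeSet.ncard + 1 - Nat.card 𝒞) + MSF T := by
  intro T hTle hTtree
  classical
  haveI : Nonempty V := hconn.nonempty
  haveI : Finite G.Subgraph := CIA.finite_subgraph G
  haveI : Finite ↥𝒞 := Subtype.finite
  haveI : Fintype ↥𝒞 := Fintype.ofFinite _
  haveI : Nonempty ↥𝒞 := hTtree.isConnected.nonempty
  -- a minimum spanning forest of T
  obtain ⟨F, hFle, hFac, hFsize⟩ : ∃ F ≤ T, F.IsAcyclic ∧ forestSize F = MSF T :=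
    Nat.sInf_mem (⟨forestSize T, T, le_refl T, hTtree.IsAcyclic, rfl⟩ :
      {n | ∃ F ≤ T, F.IsAcyclic ∧ forestSize F = n}.Nonempty)
  -- the label function on edges of the CI graph
  set L : Sym2 ↥𝒞 → V := Sym2.lift ⟨fun C D => CIA.lbl (C : G.Subgraph) (D : G.Subgraph),
    fun C D => CIA.lbl_comm _ _⟩ with hLdef
  -- the map sending an edge of G to its cycle in the decomposition, as an element of 𝒞
  set fC : Sym2 V → ↥𝒞 := fun e =>
    if h : CIA.cOf G 𝒞 e ∈ 𝒞 then ⟨CIA.cOf G 𝒞 e, h⟩ else Classical.arbitrary _ with hfCdef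
  set X : Set V := L '' ((CIGraph G 𝒞).edgeSet \ T.edgeSet) with hXdef
  set Y1 : Set V := L '' F.edgeSet with hY1def
  set Y2 : Set V := (fun C : ↥𝒞 => CIA.vtx (C : G.Subgraph)) '' {C : ↥𝒞 | ∀ D, ¬ F.Adj C D}
    with hY2def
  set S : Set V := X ∪ (Y1 ∪ Y2) with hSdef
  have hfC : ∀ e ∈ G.edgeSet, ((fC e : G.Subgraph) = CIA.cOf G 𝒞 e) ∧ CIA.cOf G 𝒞 e ∈ 𝒞 := by
    intro e he
    have h := (CIA.cOf_mem hdec he).1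
    refine ⟨?_, h⟩
    rw [hfCdef]
    simp only [dif_pos h]
  -- every cycle of the decomposition contains a vertex of S
  have hstepA : ∀ C ∈ 𝒞, ∃ x, x ∈ (C : G.Subgraph).verts ∧ x ∈ S := by
    intro C hC
    by_cases hiso : ∀ D, ¬ F.Adj ⟨C, hC⟩ D
    · have hCne : C.verts.Nonempty := (hdec.1 C hC).1.nonempty
      exact ⟨CIA.vtx C, CIA.vtx_mem hCne, Or.inr (Or.inr ⟨⟨C, hC⟩, hiso, rfl⟩)⟩
    · push_neg at hiso
      obtain ⟨D, hFD⟩ := hiso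
      have hCID : (CIGraph G 𝒞).Adj ⟨C, hC⟩ D := hTle (hFle hFD)
      have hinter : (C.verts ∩ (D : G.Subgraph).verts).Nonempty := hCID.2
      refine ⟨CIA.lbl C (D : G.Subgraph), (CIA.lbl_mem hinter).1,
        Or.inr (Or.inl ⟨s(⟨C, hC⟩, D), hFD, ?_⟩)⟩
      rw [hLdef]
      simp only [Sym2.lift_mk]
  -- a junction between two distinct cycles at a vertex outside S yields a T-edge
  have hjunction : ∀ ⦃a w z : V⦄, G.Adj a w → G.Adj w z → w ∉ S →
      CIA.cOf G 𝒞 s(a, w) ≠ CIA.cOf G 𝒞 s(w, z) →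
      T.Adj (fC s(a, w)) (fC s(w, z)) ∧
        w ∈ ((fC s(a, w) : G.Subgraph)).verts ∩ ((fC s(w, z) : G.Subgraph)).verts := by
    intro a w z h1 h2 hwS hne
    have he1 : s(a, w) ∈ G.edgeSet := h1
    have he2 : s(w, z) ∈ G.edgeSet := h2
    obtain ⟨hc1, hm1⟩ := hfC _ he1
    obtain ⟨hc2, hm2⟩ := hfC _ he2
    have he1' : s(a, w) ∈ (CIA.cOf G 𝒞 s(a, w)).edgeSet := (CIA.cOf_mem hdec he1).2
    have he2' : s(w, z) ∈ (CIA.cOf G 𝒞 s(w, z)).edgeSet := (CIA.cOf_mem hdec he2).2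
    have hwA : w ∈ (CIA.cOf G 𝒞 s(a, w)).verts :=
      (SimpleGraph.Subgraph.mem_edgeSet.mp he1').snd_mem
    have hwB : w ∈ (CIA.cOf G 𝒞 s(w, z)).verts :=
      (SimpleGraph.Subgraph.mem_edgeSet.mp he2').fst_mem
    have hfne : fC s(a, w) ≠ fC s(w, z) := by
      intro hc; apply hne
      rw [← hc1, ← hc2, hc]
    have hCI : (CIGraph G 𝒞).Adj (fC s(a, w)) (fC s(w, z)) :=
      ⟨hfne, ⟨w, by rw [hc1]; exact hwA, by rw [hc2]; exact hwB⟩⟩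
    refine ⟨?_, by rw [hc1, hc2]; exact ⟨hwA, hwB⟩⟩
    by_contra hnT
    apply hwS
    have hLX : L s(fC s(a, w), fC s(w, z)) ∈ X := ⟨_, ⟨hCI, fun hc => hnT hc⟩, rfl⟩
    have hLeq : L s(fC s(a, w), fC s(w, z)) = w := by
      rw [hLdef]
      simp only [Sym2.lift_mk]
      refine CIA.lbl_eq hsimple (fC s(a, w)).2 (fC s(w, z)).2 ?_ ?_
      · exact fun hc => hfne (Subtype.coe_injective hc)
      · rw [hc1, hc2]; exact ⟨hwA, hwB⟩
    exact Or.inl (hLeq ▸ hLX)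
  -- main claim: S meets every cycle of G
  have hmain : ∀ (u : V) (p : G.Walk u u), p.IsCycle → (∀ w ∈ p.support, w ∉ S) → False := by
    intro u p hp hpS
    have hedgeG : ∀ e ∈ p.edges, e ∈ G.edgeSet := fun e he => p.edges_subset_edgeSet he
    by_cases hall : List.Chain'
        (fun d d' : G.Dart => CIA.cOf G 𝒞 d.edge = CIA.cOf G 𝒞 d'.edge) p.darts
    · obtain ⟨b, hadj, q, hq⟩ := SimpleGraph.Walk.not_nil_iff.mp hp.not_nil
      have hd0 : p.darts.head? = some (SimpleGraph.Dart.mk (u, b) hadj) := by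
        rw [hq, SimpleGraph.Walk.darts_cons]; rfl
      set C := CIA.cOf G 𝒞 (SimpleGraph.Dart.mk (u, b) hadj).edge with hCdef
      have hCedges : ∀ e ∈ p.edges, e ∈ C.edgeSet := by
        intro e he
        obtain ⟨dd, hd, rfl⟩ := List.mem_map.mp he
        have heq : CIA.cOf G 𝒞 dd.edge = C := CIA.chain'_all_eq _ _ hall hd0 dd hd
        have hG : dd.edge ∈ G.edgeSet := hedgeG _ (List.mem_map_of_mem hd)
        rw [← heq]
        exact (CIA.cOf_mem hdec hG).2
      have hfe : s(u, b) ∈ p.edges := by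
        rw [hq, SimpleGraph.Walk.edges_cons]; exact List.mem_cons_self
      have hC𝒞 : C ∈ 𝒞 := (CIA.cOf_mem hdec (hedgeG _ hfe)).1
      obtain ⟨hCconn, hC2⟩ := hdec.1 C hC𝒞
      obtain ⟨x, hxC, hxS⟩ := hstepA C hC𝒞
      exact hpS x (CIA.verts_subset_support hCconn hC2 hp hCedges x hxC) hxS
    · unfold List.Chain' at hall
      rw [List.isChain_iff_getElem] at hall
      push_neg at hall
      obtain ⟨i, hi, hne⟩ := hall
      obtain ⟨d, hdget⟩ : ∃ d, p.darts.get ⟨i, by omega⟩ = d := ⟨_, rfl⟩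
      obtain ⟨d', hd'get⟩ : ∃ d', p.darts.get ⟨i + 1, by omega⟩ = d' := ⟨_, rfl⟩
      have hne' : CIA.cOf G 𝒞 d.edge ≠ CIA.cOf G 𝒞 d'.edge := by
        rw [← hdget, ← hd'get]; exact hne
      have hDA : d.snd = d'.fst := by
        rw [← hdget, ← hd'get]
        exact List.isChain_iff_getElem.mp (SimpleGraph.Walk.isChain_dartAdj_darts p) i hi
      have hdmem : d ∈ p.darts := by rw [← hdget]; exact List.get_mem _ _
      have hd'mem : d' ∈ p.darts := by rw [← hd'get]; exact List.get_mem _ _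
      have hvhsup : d.snd ∈ p.support :=
        SimpleGraph.Walk.dart_snd_mem_support_of_mem_darts p hdmem
      have hvhS : d.snd ∉ S := hpS _ hvhsup
      have hadj1 : G.Adj d.fst d.snd := d.adj
      have hadj2 : G.Adj d.snd d'.snd := by rw [hDA]; exact d'.adj
      have hde : d.edge = s(d.fst, d.snd) := rfl
      have hd'e : d'.edge = s(d.snd, d'.snd) := by rw [hDA]; rfl
      have hneC : CIA.cOf G 𝒞 s(d.fst, d.snd) ≠ CIA.cOf G 𝒞 s(d.snd, d'.snd) := by
        rw [← hde, ← hd'e]; exact hne'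
      obtain ⟨hTadj, hvhmem⟩ := hjunction hadj1 hadj2 hvhS hneC
      set Ah := fC s(d.fst, d.snd) with hAhdef
      set Bh := fC s(d.snd, d'.snd) with hBhdef
      have hbridge : ¬ (T \ fromEdgeSet {s(Ah, Bh)}).Reachable Ah Bh :=
        (isBridge_iff.mp ((isAcyclic_iff_forall_adj_isBridge.mp hTtree.IsAcyclic) hTadj))
      set T' := T \ fromEdgeSet {s(Ah, Bh)} with hT'def
      have hstep : ∀ ⦃a w z : V⦄, G.Adj a w → G.Adj w z → (w ∉ S ∧ w ≠ d.snd) →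
          T'.Reachable (fC s(a, w)) (fC s(w, z)) := by
        intro a w z h1 h2 hw
        by_cases heq : CIA.cOf G 𝒞 s(a, w) = CIA.cOf G 𝒞 s(w, z)
        · have hfeq : fC s(a, w) = fC s(w, z) := by rw [hfCdef]; simp only [heq]
          rw [hfeq]
        · obtain ⟨hT2, hwmem⟩ := hjunction h1 h2 hw.1 heq
          have hnotAB : s(fC s(a, w), fC s(w, z)) ≠ s(Ah, Bh) := by
            intro hAB
            apply hw.2
            have hABne : (Ah : G.Subgraph) ≠ (Bh : G.Subgraph) :=
              fun hc => T.ne_of_adj hTadj (Subtype.ext hc)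
            have hwin : w ∈ (Ah : G.Subgraph).verts ∩ (Bh : G.Subgraph).verts := by
              rcases Sym2.eq_iff.mp hAB with ⟨hA, hB⟩ | ⟨hA, hB⟩
              · rw [← hA, ← hB]; exact hwmem
              · rw [← hA, ← hB, Set.inter_comm]; exact hwmem
            exact (Set.ncard_le_one (Set.toFinite _)).mp
              (hsimple _ Ah.2 _ Bh.2 hABne) _ hwin _ hvhmem
          refine SimpleGraph.Adj.reachable ?_
          rw [hT'def]
          simp only [sdiff_adj, fromEdgeSet_adj, Set.mem_singleton_iff]
          exact ⟨hT2, fun hc => hnotAB hc.1⟩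
      set p' := p.rotate _ hvhsup with hp'def
      have hp'c : p'.IsCycle := hp.rotate hvhsup
      have hp'S : ∀ w ∈ p'.support, w ∉ S := by
        intro w hw
        rw [SimpleGraph.Walk.support_eq_cons, List.mem_cons] at hw
        rcases hw with rfl | hw
        · exact hvhS
        · exact hpS w (List.mem_of_mem_tail
            ((SimpleGraph.Walk.support_rotate p _ hvhsup).mem_iff.mp hw))
      have hp'edges : ∀ e, e ∈ p'.edges ↔ e ∈ p.edges :=
        fun e => (SimpleGraph.Walk.rotate_edges p _ hvhsup).perm.mem_iff
      obtain ⟨b, hadjb, q, hq⟩ := SimpleGraph.Walk.not_nil_iff.mp hp'c.not_nil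
      have hqis := hq ▸ hp'c
      rw [SimpleGraph.Walk.cons_isCycle_iff] at hqis
      have hqnd : q.support.Nodup := hqis.1.support_nodup
      have hqnil : ¬ q.Nil := by
        have h3 := hp'c.three_le_length
        rw [hq, SimpleGraph.Walk.length_cons] at h3
        rw [SimpleGraph.Walk.nil_iff_length_eq]; omega
      obtain ⟨dL, hdL1, hdL2⟩ := CIA.exists_getLast_dart q hqnil
      obtain ⟨b2, hadjb2, q2, hq2⟩ := SimpleGraph.Walk.not_nil_iff.mp hqnil
      have hq_head : q.darts.head? = some (SimpleGraph.Dart.mk (b, b2) hadjb2) := by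
        rw [hq2, SimpleGraph.Walk.darts_cons]; rfl
      have hbS : b ∉ S := hp'S b (by
        rw [hq, SimpleGraph.Walk.support_cons]
        exact List.mem_cons_of_mem _ (SimpleGraph.Walk.start_mem_support q))
      have hbvh : b ≠ d.snd := hadjb.ne'
      have hchain := CIA.chain_reachable T' fC (fun w => w ∉ S ∧ w ≠ d.snd) hstep q hqnd
        (fun w hw _ hwv => ⟨hp'S w (by rw [hq, SimpleGraph.Walk.support_cons]; exact List.mem_cons_of_mem _ hw), hwv⟩)
        (SimpleGraph.Dart.mk (b, b2) hadjb2) hq_head dL hdL2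
      have h1 : T'.Reachable (fC s(d.snd, b)) (fC s(b, b2)) := hstep hadjb hadjb2 ⟨hbS, hbvh⟩
      have hreach : T'.Reachable (fC s(d.snd, b)) (fC dL.edge) := h1.trans hchain
      have hclass : ∀ e ∈ p'.edges, d.snd ∈ e → e = s(d.snd, b) ∨ e = dL.edge := by
        intro e he hve
        exact CIA.edge_of_endpoint_mem hadjb hqnd (hq ▸ he) hve hdL2
      have hdmem' : d.edge ∈ p'.edges := (hp'edges _).mpr (List.mem_map_of_mem hdmem)
      have hd'mem' : d'.edge ∈ p'.edges := (hp'edges _).mpr (List.mem_map_of_mem hd'mem)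
      have hvd : d.snd ∈ d.edge := Sym2.mem_mk_right _ _
      have hvd' : d.snd ∈ d'.edge := by rw [hd'e]; exact Sym2.mem_mk_left _ _
      have hdedge_ne : d.edge ≠ d'.edge := fun hc => hne' (by rw [hc])
      have hAe : Ah = fC d.edge := by rw [hde]
      have hBe : Bh = fC d'.edge := by rw [hd'e]
      rcases hclass _ hdmem' hvd with h1d | h1d <;> rcases hclass _ hd'mem' hvd' with h2d | h2d
      · exact hdedge_ne (h1d.trans h2d.symm)
      · apply hbridge
        rw [hAe, hBe, h1d, h2d]
        exact hreach
      · apply hbridge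
        rw [hAe, hBe, h1d, h2d]
        exact hreach.symm
      · exact hdedge_ne (h1d.trans h2d.symm)
  -- S is a decycling set
  have hdecS : IsDecyclingSet G S := by
    intro v c hc
    let f := SimpleGraph.Embedding.induce (G := G) Sᶜ
    have hc' : (c.map f.toHom).IsCycle :=
      (SimpleGraph.Walk.map_isCycle_iff_of_injective f.injective).mpr hc
    refine hmain _ (c.map f.toHom) hc' ?_
    intro w hw
    rw [SimpleGraph.Walk.support_map] at hw
    obtain ⟨w', hw', rfl⟩ := List.mem_map.mp hw
    exact w'.2
  -- counting
  have hneq : decyclingNumber G ≤ S.ncard := Nat.sInf_le ⟨S, hdecS, rfl⟩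
  have hXb : X.ncard ≤ (CIGraph G 𝒞).edgeSet.ncard - T.edgeSet.ncard := by
    calc X.ncard ≤ ((CIGraph G 𝒞).edgeSet \ T.edgeSet).ncard :=
          Set.ncard_image_le (Set.toFinite _)
      _ = _ := Set.ncard_diff (edgeSet_mono hTle) (Set.toFinite _)
  have hY1b : Y1.ncard ≤ F.edgeSet.ncard := Set.ncard_image_le (Set.toFinite _)
  have hY2b : Y2.ncard ≤ {C : ↥𝒞 | ∀ D, ¬ F.Adj C D}.ncard := Set.ncard_image_le (Set.toFinite _)
  have hSb : S.ncard ≤ ((CIGraph G 𝒞).edgeSet.ncard - T.edgeSet.ncard) + forestSize F := by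
    have h1 : S.ncard ≤ X.ncard + (Y1 ∪ Y2).ncard := Set.ncard_union_le _ _
    have h2 : (Y1 ∪ Y2).ncard ≤ Y1.ncard + Y2.ncard := Set.ncard_union_le _ _
    have h3 : forestSize F = F.edgeSet.ncard + {C : ↥𝒞 | ∀ D, ¬ F.Adj C D}.ncard := rfl
    omega
  have hT_le : T.edgeSet.ncard ≤ (CIGraph G 𝒞).edgeSet.ncard :=
    Set.ncard_le_ncard (edgeSet_mono hTle) (Set.toFinite _)
  have hTcard : T.edgeSet.ncard + 1 = Nat.card ↥𝒞 := by
    haveI : Fintype T.edgeSet := Fintype.ofFinite _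
    have h := hTtree.card_edgeFinset
    rw [Nat.card_eq_fintype_card, ← h]
    congr 1
    rw [Set.ncard_eq_toFinset_card']
    exact congrArg Finset.card (by ext e; simp)
  omega
end

section
/- Let G be a connected even graph and let 𝒞 be a cycle decomposition of G whose cycle intersection graph CI(G) is simple. Let S_CI be a subset of the edges of CI(G) whose removal from CI(G) leaves a spanning tree of CI(G), and let S_G be the set of intersection vertices of G labelling the edges of S_CI. Then in the graph G′ = G − S_G, every edge of G′ lies on at most one cycle of G′. -/
open SimpleGraph

variable {V : Type*}

lemma acyclic_not_reachable_deleteEdge {W : Type*} {T : SimpleGraph W} (hT : T.IsAcyclic)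
    {x y : W} (hxy : T.Adj x y) : ¬ (T.deleteEdges {s(x, y)}).Reachable x y := by
  intro hreach
  letI : DecidableEq W := Classical.decEq W
  obtain ⟨p⟩ := hreach
  have hsub : ∀ e ∈ p.edges, e ∈ T.edgeSet := by
    intro e he
    have := p.edges_subset_edgeSet he
    rw [SimpleGraph.edgeSet_deleteEdges] at this
    exact this.1
  let q : T.Walk x y := p.transfer T hsub
  have hq : q.edges = p.edges := p.edges_transfer hsub
  have hnotin : s(x, y) ∉ q.edges := by
    rw [hq]
    intro hmem
    have := p.edges_subset_edgeSet hmem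
    rw [SimpleGraph.edgeSet_deleteEdges] at this
    exact this.2 rfl
  have hcyc : (SimpleGraph.Walk.cons hxy q.bypass.reverse).IsCycle := by
    rw [SimpleGraph.Walk.cons_isCycle_iff]
    refine ⟨q.bypass_isPath.reverse, ?_⟩
    intro hmem
    rw [SimpleGraph.Walk.edges_reverse, List.mem_reverse] at hmem
    exact hnotin (q.edges_bypass_subset hmem)
  exact hT _ hcyc

/-- Adjacency in a subgraph of an induced graph gives adjacency in the ambient graph. -/
lemma adj_of_induce_sub {G : SimpleGraph V} {s : Set V} {H : (G.induce s).Subgraph}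
    {a b : ↥s} (h : H.Adj a b) : G.Adj ↑a ↑b := by
  have := H.adj_sub h
  simpa using this

/-- **Key transition lemma**: if two edges of a cycle subgraph `H` of `G − S_G` share a vertex,
then they lie in the same cycle of the decomposition. -/
lemma transition_eq [Fintype V] {G : SimpleGraph V} {𝒞 : Set G.Subgraph}
    (hdec : IsCycleDecomposition G 𝒞) (hsimple : CISimple G 𝒞)
    {S_CI : Set (Sym2 𝒞)}
    (htree : ((CIGraph G 𝒞).deleteEdges S_CI).IsTree)
    {S_G : Set V}
    (hSG : S_G = {v : V | ∃ C D : 𝒞, s(C, D) ∈ S_CI ∧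
      v ∈ (C : G.Subgraph).verts ∩ (D : G.Subgraph).verts})
    {H : (G.induce S_Gᶜ).Subgraph} (hH : IsCycleSubgraph H)
    {u a b : ↥S_Gᶜ} (hua : H.Adj u a) (hub : H.Adj u b)
    {X Y : G.Subgraph} (hX𝒞 : X ∈ 𝒞) (hXa : X.Adj ↑u ↑a)
    (hY𝒞 : Y ∈ 𝒞) (hYb : Y.Adj ↑u ↑b) : X = Y := by
  classical
  by_contra hXY
  -- basic edge facts
  have hGua : G.Adj ↑u ↑a := adj_of_induce_sub hua
  have hGub : G.Adj ↑u ↑b := adj_of_induce_sub hub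
  -- a ≠ b
  have hab : a ≠ b := by
    rintro rfl
    exact hXY ((hdec.2 s(↑u, ↑a) hGua).unique ⟨hX𝒞, hXa⟩ ⟨hY𝒞, hYb⟩)
  -- set up tree and bridge
  set Tr := (CIGraph G 𝒞).deleteEdges S_CI with hTr
  set Cv : ↥𝒞 := ⟨X, hX𝒞⟩ with hCv
  set Dv : ↥𝒞 := ⟨Y, hY𝒞⟩ with hDv
  have hCD : Cv ≠ Dv := fun h => hXY (congrArg Subtype.val h)
  have huX : (↑u : V) ∈ X.verts := hXa.fst_mem
  have huY : (↑u : V) ∈ Y.verts := hYb.fst_mem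
  have hnotSCI : s(Cv, Dv) ∉ S_CI := by
    intro hmem
    exact u.2 (hSG.symm.subset ⟨Cv, Dv, hmem, huX, huY⟩)
  have hTadj : Tr.Adj Cv Dv := by
    rw [hTr, SimpleGraph.deleteEdges_adj]
    exact ⟨⟨hCD, ⟨↑u, huX, huY⟩⟩, hnotSCI⟩
  set Tr2 := Tr.deleteEdges {s(Cv, Dv)} with hTr2
  have hnr : ¬ Tr2.Reachable Cv Dv :=
    acyclic_not_reachable_deleteEdge htree.2 hTadj
  -- auxiliary graph `K`: edges of `H` whose decomposition cycle lies on the `X`-side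
  set K : SimpleGraph ↥S_Gᶜ :=
    { Adj := fun p q => H.Adj p q ∧ ∀ (Z : G.Subgraph) (hZ : Z ∈ 𝒞), Z.Adj ↑p ↑q →
        Tr2.Reachable ⟨Z, hZ⟩ Cv
      symm := by
        constructor
        rintro p q ⟨h1, h2⟩
        exact ⟨h1.symm, fun Z hZ hadj => h2 Z hZ hadj.symm⟩
      loopless := by constructor; rintro p ⟨h1, -⟩; exact h1.ne rfl } with hKdef
  letI : Fintype ↥S_Gᶜ := Fintype.ofFinite _
  letI : DecidableRel K.Adj := Classical.decRel _
  have hKua : K.Adj u a := by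
    refine ⟨hua, fun Z hZ hadj => ?_⟩
    have hZX : Z = X :=
      (hdec.2 s(↑u, ↑a) hGua).unique ⟨hZ, Subgraph.mem_edgeSet.2 hadj⟩
        ⟨hX𝒞, Subgraph.mem_edgeSet.2 hXa⟩
    subst hZX
    exact Reachable.refl _
  have hKub : ¬ K.Adj u b := by
    rintro ⟨-, h2⟩
    exact hnr (h2 Y hY𝒞 hYb).symm
  -- any vertex with a "one-sided" pair of edges must be `u`
  have inner : ∀ (w p q : ↥S_Gᶜ), H.Adj w p → H.Adj w q → K.Adj w p → ¬ K.Adj w q → w = u := by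
    intro w p q hwp hwq hKp hKq
    have hGwp : G.Adj ↑w ↑p := adj_of_induce_sub hwp
    have hGwq : G.Adj ↑w ↑q := adj_of_induce_sub hwq
    obtain ⟨P, ⟨hP𝒞, hPe⟩, -⟩ := hdec.2 s(↑w, ↑p) hGwp
    obtain ⟨Q, ⟨hQ𝒞, hQe⟩, -⟩ := hdec.2 s(↑w, ↑q) hGwq
    have hPadj : P.Adj ↑w ↑p := Subgraph.mem_edgeSet.1 hPe
    have hQadj : Q.Adj ↑w ↑q := Subgraph.mem_edgeSet.1 hQe
    have hreachP : Tr2.Reachable ⟨P, hP𝒞⟩ Cv := hKp.2 P hP𝒞 hPadj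
    have hnreachQ : ¬ Tr2.Reachable ⟨Q, hQ𝒞⟩ Cv := by
      intro hr
      refine hKq ⟨hwq, fun Z hZ hadj => ?_⟩
      have hZQ : Z = Q :=
        (hdec.2 s(↑w, ↑q) hGwq).unique ⟨hZ, Subgraph.mem_edgeSet.2 hadj⟩ ⟨hQ𝒞, hQe⟩
      subst hZQ
      exact hr
    have hPQ : (⟨P, hP𝒞⟩ : ↥𝒞) ≠ ⟨Q, hQ𝒞⟩ := fun h => hnreachQ (h ▸ hreachP)
    have hwP : (↑w : V) ∈ P.verts := hPadj.fst_mem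
    have hwQ : (↑w : V) ∈ Q.verts := hQadj.fst_mem
    have hnotS : s((⟨P, hP𝒞⟩ : ↥𝒞), ⟨Q, hQ𝒞⟩) ∉ S_CI := fun hmem =>
      w.2 (hSG.symm.subset ⟨_, _, hmem, hwP, hwQ⟩)
    have hTadjPQ : Tr.Adj ⟨P, hP𝒞⟩ ⟨Q, hQ𝒞⟩ := by
      rw [hTr, SimpleGraph.deleteEdges_adj]
      exact ⟨⟨hPQ, ⟨↑w, hwP, hwQ⟩⟩, hnotS⟩
    have hedge_eq : s((⟨P, hP𝒞⟩ : ↥𝒞), ⟨Q, hQ𝒞⟩) = s(Cv, Dv) := by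
      by_contra hne
      have hTr2adj : Tr2.Adj ⟨P, hP𝒞⟩ ⟨Q, hQ𝒞⟩ := by
        rw [hTr2, SimpleGraph.deleteEdges_adj]
        exact ⟨hTadjPQ, by simpa using hne⟩
      exact hnreachQ (hTr2adj.symm.reachable.trans hreachP)
    rw [Sym2.eq_iff] at hedge_eq
    have hwXY : (↑w : V) ∈ X.verts ∧ (↑w : V) ∈ Y.verts := by
      rcases hedge_eq with ⟨h1, h2⟩ | ⟨h1, h2⟩
      · have e1 : P = X := congrArg Subtype.val h1
        have e2 : Q = Y := congrArg Subtype.val h2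
        exact ⟨e1 ▸ hwP, e2 ▸ hwQ⟩
      · exact absurd (h1 ▸ hreachP).symm hnr
    have hsimp := (Set.ncard_le_one (Set.toFinite _)).1 (hsimple X hX𝒞 Y hY𝒞 hXY)
    exact Subtype.ext (hsimp _ ⟨hwXY.1, hwXY.2⟩ _ ⟨huX, huY⟩)
  -- every odd-degree vertex of `K` equals `u`
  have hdeg : ∀ w : ↥S_Gᶜ, Odd (K.degree w) → w = u := by
    intro w hodd
    have hcard : Odd ((K.neighborFinset w).card) := hodd
    have hposs : (K.neighborFinset w).Nonempty := by
      rw [← Finset.card_pos]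
      rcases hcard with ⟨k, hk⟩; omega
    obtain ⟨p₀, hp₀⟩ := hposs
    have hKp₀ : K.Adj w p₀ := by rwa [SimpleGraph.mem_neighborFinset] at hp₀
    have hwH : w ∈ H.verts := hKp₀.1.fst_mem
    obtain ⟨p, q, hpqne, hpqeq⟩ := Set.ncard_eq_two.1 (hH.2 w hwH)
    have hwp : H.Adj w p := by
      have : p ∈ H.neighborSet w := by rw [hpqeq]; exact Or.inl rfl
      exact this
    have hwq : H.Adj w q := by
      have : q ∈ H.neighborSet w := by rw [hpqeq]; exact Or.inr rfl
      exact this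
    have hsubnb : K.neighborFinset w ⊆ {p, q} := by
      intro z hz
      rw [SimpleGraph.mem_neighborFinset] at hz
      have hz' : z ∈ H.neighborSet w := hz.1
      rw [hpqeq] at hz'
      simpa using hz'
    have hcardle : (K.neighborFinset w).card ≤ 2 :=
      le_trans (Finset.card_le_card hsubnb) (by
        exact le_trans (Finset.card_insert_le _ _) (by simp))
    have hcard1 : (K.neighborFinset w).card = 1 := by
      rcases hcard with ⟨k, hk⟩; omega
    obtain ⟨r, hr⟩ := Finset.card_eq_one.1 hcard1
    have hKr : K.Adj w r := by
      rw [← SimpleGraph.mem_neighborFinset, hr]; exact Finset.mem_singleton_self r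
    have hrmem : r ∈ ({p, q} : Finset _) := hsubnb (by
      rw [hr]; exact Finset.mem_singleton_self r)
    rcases Finset.mem_insert.1 hrmem with rfl | hrq
    · -- r = p
      refine inner w r q hwp hwq hKr (fun hKq => ?_)
      have : q ∈ K.neighborFinset w := by rwa [SimpleGraph.mem_neighborFinset]
      rw [hr] at this
      exact hpqne ((Finset.mem_singleton.1 this).symm)
    · have hrq' : r = q := Finset.mem_singleton.1 hrq
      subst hrq'
      refine inner w r p hwq hwp hKr (fun hKp => ?_)
      have : p ∈ K.neighborFinset w := by rwa [SimpleGraph.mem_neighborFinset]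
      rw [hr] at this
      exact hpqne (Finset.mem_singleton.1 this)
  -- but `u` itself has odd degree 1 in `K`
  have hnbu : K.neighborFinset u = {a} := by
    ext z
    rw [SimpleGraph.mem_neighborFinset, Finset.mem_singleton]
    constructor
    · intro hz
      have hz' : z ∈ H.neighborSet u := hz.1
      have hsub2 : ({a, b} : Set _) ⊆ H.neighborSet u := by
        rintro y (rfl | rfl)
        · exact hua
        · exact hub
      have heq : ({a, b} : Set _) = H.neighborSet u :=
        Set.eq_of_subset_of_ncard_le hsub2
          (by rw [hH.2 u hua.fst_mem, Set.ncard_pair hab]) (Set.toFinite _)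
      rw [← heq] at hz'
      rcases hz' with rfl | rfl
      · rfl
      · exact absurd hz hKub
    · rintro rfl; exact hKua
  have hodd_u : Odd (K.degree u) := by
    have : K.degree u = 1 := by
      rw [← SimpleGraph.card_neighborFinset_eq_degree, hnbu, Finset.card_singleton]
    rw [this]; exact odd_one
  have heven := K.even_card_odd_degree_vertices
  have hfilter : (Finset.univ.filter fun w => Odd (K.degree w)) = {u} := by
    ext w
    simp only [Finset.mem_filter, Finset.mem_univ, true_and, Finset.mem_singleton]
    exact ⟨hdeg w, fun h => h ▸ hodd_u⟩
  rw [hfilter, Finset.card_singleton] at heven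
  exact (by decide : ¬ Even 1) heven

/-- All edges of a cycle subgraph of `G − S_G` lie in the same cycle of the decomposition. -/
lemma walk_cycles_eq [Fintype V] {G : SimpleGraph V} {𝒞 : Set G.Subgraph}
    (hdec : IsCycleDecomposition G 𝒞) (hsimple : CISimple G 𝒞)
    {S_CI : Set (Sym2 𝒞)}
    (htree : ((CIGraph G 𝒞).deleteEdges S_CI).IsTree)
    {S_G : Set V}
    (hSG : S_G = {v : V | ∃ C D : 𝒞, s(C, D) ∈ S_CI ∧
      v ∈ (C : G.Subgraph).verts ∩ (D : G.Subgraph).verts})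
    {H : (G.induce S_Gᶜ).Subgraph} (hH : IsCycleSubgraph H) :
    ∀ (a b : ↥H.verts) (p : H.coe.Walk a b) (x y : ↥S_Gᶜ), H.Adj ↑a x → H.Adj ↑b y →
    ∀ {X Y : G.Subgraph}, X ∈ 𝒞 → X.Adj ↑(a : ↥S_Gᶜ) ↑x → Y ∈ 𝒞 → Y.Adj ↑(b : ↥S_Gᶜ) ↑y →
      X = Y := by
  intro a b p
  induction p with
  | nil =>
    intro x y hax hby X Y hX hXa hY hYb
    exact transition_eq hdec hsimple htree hSG hH hax hby hX hXa hY hYb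
  | @cons a c b h p ih =>
    intro x y hax hby X Y hX hXa hY hYb
    have hac : H.Adj ↑a ↑c := h
    have hGac : G.Adj ↑(↑a : ↥S_Gᶜ) ↑(↑c : ↥S_Gᶜ) := adj_of_induce_sub hac
    obtain ⟨Z, ⟨hZ𝒞, hZe⟩, -⟩ := hdec.2 s(↑(↑a : ↥S_Gᶜ), ↑(↑c : ↥S_Gᶜ)) hGac
    have hZadj : Z.Adj ↑(↑a : ↥S_Gᶜ) ↑(↑c : ↥S_Gᶜ) := Subgraph.mem_edgeSet.1 hZe
    have h1 : X = Z := transition_eq hdec hsimple htree hSG hH hax hac hX hXa hZ𝒞 hZadj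
    have h2 : Z = Y := ih ↑a y hac.symm hby hZ𝒞 hZadj.symm hY hYb
    exact h1.trans h2

lemma cycle_edges_in_one [Fintype V] {G : SimpleGraph V} {𝒞 : Set G.Subgraph}
    (hdec : IsCycleDecomposition G 𝒞) (hsimple : CISimple G 𝒞)
    {S_CI : Set (Sym2 𝒞)}
    (htree : ((CIGraph G 𝒞).deleteEdges S_CI).IsTree)
    {S_G : Set V}
    (hSG : S_G = {v : V | ∃ C D : 𝒞, s(C, D) ∈ S_CI ∧
      v ∈ (C : G.Subgraph).verts ∩ (D : G.Subgraph).verts})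
    {H : (G.induce S_Gᶜ).Subgraph} (hH : IsCycleSubgraph H)
    {X : G.Subgraph} (hX : X ∈ 𝒞) {a₁ a₂ : ↥S_Gᶜ} (h₁ : H.Adj a₁ a₂)
    (hXe : X.Adj ↑a₁ ↑a₂) {b₁ b₂ : ↥S_Gᶜ} (h₂ : H.Adj b₁ b₂) :
    X.Adj ↑b₁ ↑b₂ := by
  obtain ⟨Y, ⟨hY𝒞, hYe⟩, -⟩ := hdec.2 s(↑b₁, ↑b₂) (adj_of_induce_sub h₂)
  have hYadj : Y.Adj ↑b₁ ↑b₂ := Subgraph.mem_edgeSet.1 hYe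
  have hreach := hH.1.coe.preconnected ⟨a₁, h₁.fst_mem⟩ ⟨b₁, h₂.fst_mem⟩
  refine hreach.elim fun p => ?_
  have hXY : X = Y :=
    walk_cycles_eq hdec hsimple htree hSG hH ⟨a₁, h₁.fst_mem⟩ ⟨b₁, h₂.fst_mem⟩ p a₂ b₂
      h₁ h₂ hX hXe hY𝒞 hYadj
  rw [hXY]; exact hYadj

/-- Two connected 2-regular subgraphs of an induced graph contained in a single cycle of `G`
and sharing an edge coincide. -/
lemma cycle_eq_of_common [Fintype V] {G : SimpleGraph V} {s : Set V} {C : G.Subgraph}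
    (hC2 : ∀ v ∈ C.verts, (C.neighborSet v).ncard = 2)
    {H₁ H₂ : (G.induce s).Subgraph} (h₁ : IsCycleSubgraph H₁) (h₂ : IsCycleSubgraph H₂)
    (hall₁ : ∀ {x y : ↥s}, H₁.Adj x y → C.Adj ↑x ↑y)
    (hall₂ : ∀ {x y : ↥s}, H₂.Adj x y → C.Adj ↑x ↑y)
    {a b : ↥s} (hab₁ : H₁.Adj a b) (hab₂ : H₂.Adj a b) : H₁ = H₂ := by
  have key : ∀ (H : (G.induce s).Subgraph), IsCycleSubgraph H →
      (∀ {x y : ↥s}, H.Adj x y → C.Adj ↑x ↑y) →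
      ∀ u, u ∈ H.verts → Subtype.val '' (H.neighborSet u) = C.neighborSet ↑u := by
    intro H hH hall u hu
    have h2 := hH.2 u hu
    have hne : (H.neighborSet u).Nonempty :=
      Set.nonempty_of_ncard_ne_zero (by rw [h2]; omega)
    obtain ⟨z, hz⟩ := hne
    have huC : (↑u : V) ∈ C.verts := (hall hz).fst_mem
    have hsub : Subtype.val '' (H.neighborSet u) ⊆ C.neighborSet ↑u := by
      rintro _ ⟨z', hz', rfl⟩
      exact hall hz'
    exact Set.eq_of_subset_of_ncard_le hsub (by
      rw [Set.ncard_image_of_injective _ Subtype.val_injective, h2, hC2 ↑u huC])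
      (Set.toFinite _)
  have adj_iff : ∀ u, u ∈ H₁.verts → u ∈ H₂.verts → ∀ z, (H₁.Adj u z ↔ H₂.Adj u z) := by
    intro u hu1 hu2 z
    have e1 := key H₁ h₁ (fun h => hall₁ h) u hu1
    have e2 := key H₂ h₂ (fun h => hall₂ h) u hu2
    constructor <;> intro h
    · have hmem : (↑z : V) ∈ Subtype.val '' (H₂.neighborSet u) := by
        rw [e2, ← e1]; exact ⟨z, h, rfl⟩
      obtain ⟨z', hz', hzz⟩ := hmem
      rwa [Subtype.val_injective hzz] at hz'
    · have hmem : (↑z : V) ∈ Subtype.val '' (H₁.neighborSet u) := by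
        rw [e1, ← e2]; exact ⟨z, h, rfl⟩
      obtain ⟨z', hz', hzz⟩ := hmem
      rwa [Subtype.val_injective hzz] at hz'
  have aux12 : ∀ (x y : ↥H₁.verts) (p : H₁.coe.Walk x y), ↑x ∈ H₂.verts → ↑y ∈ H₂.verts := by
    intro x y p
    induction p with
    | nil => exact id
    | @cons x c y h p ih =>
      intro hx
      have hadj : H₁.Adj ↑x ↑c := h
      have : H₂.Adj ↑x ↑c := (adj_iff ↑x x.2 hx ↑c).1 hadj
      exact ih this.snd_mem
  have aux21 : ∀ (x y : ↥H₂.verts) (p : H₂.coe.Walk x y), ↑x ∈ H₁.verts → ↑y ∈ H₁.verts := by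
    intro x y p
    induction p with
    | nil => exact id
    | @cons x c y h p ih =>
      intro hx
      have hadj : H₂.Adj ↑x ↑c := h
      have : H₁.Adj ↑x ↑c := (adj_iff ↑x hx x.2 ↑c).2 hadj
      exact ih this.snd_mem
  have dir1 : ∀ u, u ∈ H₁.verts → u ∈ H₂.verts := by
    intro u hu
    have hreach := h₁.1.coe.preconnected ⟨a, hab₁.fst_mem⟩ ⟨u, hu⟩
    exact hreach.elim fun p => aux12 _ _ p hab₂.fst_mem
  have dir2 : ∀ u, u ∈ H₂.verts → u ∈ H₁.verts := by
    intro u hu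
    have hreach := h₂.1.coe.preconnected ⟨a, hab₂.fst_mem⟩ ⟨u, hu⟩
    exact hreach.elim fun p => aux21 _ _ p hab₁.fst_mem
  have hv : H₁.verts = H₂.verts := Set.ext fun u => ⟨dir1 u, dir2 u⟩
  refine Subgraph.ext hv ?_
  funext x y
  exact propext ⟨fun h => (adj_iff x h.fst_mem (dir1 x h.fst_mem) y).1 h,
    fun h => (adj_iff x (dir2 x h.fst_mem) h.fst_mem y).2 h⟩


/-- Let `G` be a connected even graph and `𝒞` a cycle decomposition of `G`
whose cycle intersection graph is simple.  Let `S_CI` be a set of edges of `CI(G)` whose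
removal leaves a spanning tree of `CI(G)`, and let `S_G` be the set of intersection
vertices of `G` labelling the edges of `S_CI`.  Then in `G′ = G − S_G` every edge lies on
at most one cycle of `G′`: any two cycle subgraphs of `G′` sharing an edge coincide. -/
theorem edge_in_at_most_one_cycle_after_removal [Fintype V]
    (G : SimpleGraph V) (hconn : G.Connected) (heven : IsEvenGraph G)
    (𝒞 : Set G.Subgraph) (hdec : IsCycleDecomposition G 𝒞)
    (hsimple : CISimple G 𝒞)
    (S_CI : Set (Sym2 𝒞)) (hsub : S_CI ⊆ (CIGraph G 𝒞).edgeSet)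
    (htree : ((CIGraph G 𝒞).deleteEdges S_CI).IsTree)
    (S_G : Set V)
    (hSG : S_G = {v : V | ∃ C D : 𝒞, s(C, D) ∈ S_CI ∧
      v ∈ (C : G.Subgraph).verts ∩ (D : G.Subgraph).verts}) :
    ∀ H₁ H₂ : (G.induce S_Gᶜ).Subgraph,
      IsCycleSubgraph H₁ → IsCycleSubgraph H₂ →
      ∀ e, e ∈ H₁.edgeSet → e ∈ H₂.edgeSet → H₁ = H₂ := by
  intro H₁ H₂ h₁ h₂ e he₁ he₂
  induction e using Sym2.ind with
  | _ a b =>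
  have hab₁ : H₁.Adj a b := Subgraph.mem_edgeSet.1 he₁
  have hab₂ : H₂.Adj a b := Subgraph.mem_edgeSet.1 he₂
  obtain ⟨X, ⟨hX𝒞, hXe⟩, -⟩ := hdec.2 s(↑a, ↑b) (adj_of_induce_sub hab₁)
  have hXadj : X.Adj ↑a ↑b := Subgraph.mem_edgeSet.1 hXe
  have hall₁ : ∀ {x y : ↥S_Gᶜ}, H₁.Adj x y → X.Adj ↑x ↑y := fun h =>
    cycle_edges_in_one hdec hsimple htree hSG h₁ hX𝒞 hab₁ hXadj h
  have hall₂ : ∀ {x y : ↥S_Gᶜ}, H₂.Adj x y → X.Adj ↑x ↑y := fun h =>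
    cycle_edges_in_one hdec hsimple htree hSG h₂ hX𝒞 hab₂ hXadj h
  exact cycle_eq_of_common (hdec.1 X hX𝒞).2 h₁ h₂ (fun h => hall₁ h) (fun h => hall₂ h)
    hab₁ hab₂
end
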